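/- arXiv:2603.18017 — 3 statements merged into one kernel-verified Lean document; each statement's English description precedes it below -/
import Mathlib

section
/- If a_j ≥ 0 are uniformly bounded, the sequence (a_j) has sublinear total variation Σ_{j=1}^{n−1}|a_{j+1}−a_j| = o(n), and θ is not an integer multiple of π, then Σ_{j=1}^n a_j e^{2jθi} = o(n) as n → ∞. -/
open scoped BigOperators
open Filter

/-- If `a_j ≥ 0` are uniformly bounded, have sublinear total variation, and `θ`
is not an integer multiple of `π`, then `∑_{j=1}^n a_j e^{2jθi} = o(n)`. -/
theorem oscillatory_sum_sublinear (a : ℕ → ℝ) (ha : ∀ j, 0 ≤ a j)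
    (C : ℝ) (hC : ∀ j, a j ≤ C)
    (hTV : Tendsto
      (fun n : ℕ => (∑ j ∈ Finset.Icc 1 (n - 1), |a (j + 1) - a j|) / n)
      atTop (nhds 0))
    (θ : ℝ) (hθ : ∀ k : ℤ, θ ≠ k * Real.pi) :
    Tendsto
      (fun n : ℕ =>
        ‖∑ j ∈ Finset.Icc 1 n,
          (a j : ℂ) * Complex.exp (2 * j * θ * Complex.I)‖ / n)
      atTop (nhds 0) := by
  set z : ℂ := Complex.exp (2 * θ * Complex.I) with hz
  have hz1 : z ≠ 1 := by
    intro h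
    rw [hz, Complex.exp_eq_one_iff] at h
    obtain ⟨k, hk⟩ := h
    apply hθ k
    have hI : (Complex.I : ℂ) ≠ 0 := Complex.I_ne_zero
    have h2 : (2 : ℂ) ≠ 0 := two_ne_zero
    have : (θ : ℂ) = (k : ℂ) * Real.pi := by
      have : 2 * (θ : ℂ) * Complex.I = 2 * ((k : ℂ) * Real.pi) * Complex.I := by
        rw [hk]; ring
      have := mul_right_cancel₀ hI this
      exact mul_left_cancel₀ h2 this
    exact_mod_cast this
  have habs : ‖z‖ = 1 := by
    rw [hz, Complex.norm_exp]
    simp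
  have hd0 : 0 < ‖(z - 1)‖ := by
    simpa [sub_eq_zero] using hz1
  set M : ℝ := 2 / ‖(z - 1)‖ with hM
  have hMpos : 0 < M := by positivity
  have hG : ∀ k : ℕ, ‖(∑ j ∈ Finset.range k, z ^ j)‖ ≤ M := by
    intro k
    rw [geom_sum_eq hz1, norm_div, hM]
    gcongr
    calc ‖(z ^ k - 1)‖ ≤ ‖(z ^ k)‖ + ‖(1 : ℂ)‖ :=
          norm_sub_le _ _
      _ ≤ 2 := by rw [norm_pow, habs]; norm_num
  have hC0 : 0 ≤ C := le_trans (ha 0) (hC 0)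
  -- exponential rewrite
  have hexp : ∀ j : ℕ, Complex.exp (2 * j * θ * Complex.I) = z ^ j := by
    intro j
    rw [hz, ← Complex.exp_nat_mul]
    ring_nf
  have key : ∀ n : ℕ, 1 ≤ n →
      ‖(∑ j ∈ Finset.Icc 1 n, (a j : ℂ) * Complex.exp (2 * j * θ * Complex.I))‖
        ≤ M * (2 * C + ∑ j ∈ Finset.Icc 1 (n - 1), |a (j + 1) - a j|) := by
    intro n hn
    have hrw : (∑ j ∈ Finset.Icc 1 n, (a j : ℂ) * Complex.exp (2 * j * θ * Complex.I))
        = ∑ j ∈ Finset.Ioc 0 n, ((a j : ℂ)) • (z ^ j) := by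
      rw [← Finset.Icc_add_one_left_eq_Ioc]
      exact Finset.sum_congr rfl fun j _ => by rw [hexp, smul_eq_mul]
    rw [hrw, Finset.sum_Ioc_by_parts (fun j => (a j : ℂ)) (fun j => z ^ j) hn]
    have habs_a : ∀ j : ℕ, ‖((a j : ℂ))‖ ≤ C := by
      intro j
      rw [Complex.norm_real, Real.norm_eq_abs, abs_of_nonneg (ha j)]
      exact hC j
    have hterm : ∀ i : ℕ,
        ‖((((a (i + 1) : ℂ)) - (a i : ℂ)) • ∑ j ∈ Finset.range (i + 1), z ^ j)‖
          ≤ |a (i + 1) - a i| * M := by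
      intro i
      rw [smul_eq_mul, norm_mul]
      have : ‖(((a (i + 1) : ℂ)) - (a i : ℂ))‖ = |a (i + 1) - a i| := by
        rw [← Complex.ofReal_sub, Complex.norm_real, Real.norm_eq_abs]
      rw [this]
      exact mul_le_mul_of_nonneg_left (hG _) (abs_nonneg _)
    calc ‖((a n : ℂ) • ∑ j ∈ Finset.range (n + 1), z ^ j
            - (a (0 + 1) : ℂ) • ∑ j ∈ Finset.range (0 + 1), z ^ j
            - ∑ i ∈ Finset.Ioc 0 (n - 1),
                (((a (i + 1) : ℂ)) - (a i : ℂ)) • ∑ j ∈ Finset.range (i + 1), z ^ j)‖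
        ≤ ‖((a n : ℂ) • ∑ j ∈ Finset.range (n + 1), z ^ j)‖
            + ‖((a (0 + 1) : ℂ) • ∑ j ∈ Finset.range (0 + 1), z ^ j)‖
            + ‖(∑ i ∈ Finset.Ioc 0 (n - 1),
                (((a (i + 1) : ℂ)) - (a i : ℂ)) • ∑ j ∈ Finset.range (i + 1), z ^ j)‖ := by
          refine le_trans (norm_sub_le _ _) ?_
          have := norm_sub_le ((a n : ℂ) • ∑ j ∈ Finset.range (n + 1), z ^ j)
            ((a (0 + 1) : ℂ) • ∑ j ∈ Finset.range (0 + 1), z ^ j)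
          linarith
      _ ≤ C * M + C * M
            + ∑ i ∈ Finset.Ioc 0 (n - 1), |a (i + 1) - a i| * M := by
          gcongr
          · rw [smul_eq_mul, norm_mul]
            exact mul_le_mul (habs_a n) (hG _) (norm_nonneg _) hC0
          · rw [smul_eq_mul, norm_mul]
            exact mul_le_mul (habs_a 1) (hG _) (norm_nonneg _) hC0
          · exact le_trans (norm_sum_le _ _)
              (Finset.sum_le_sum fun i _ => hterm i)
      _ = M * (2 * C + ∑ j ∈ Finset.Icc 1 (n - 1), |a (j + 1) - a j|) := by
          rw [← Finset.Icc_add_one_left_eq_Ioc, ← Finset.sum_mul]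
          ring
  -- squeeze
  have hbound : Tendsto
      (fun n : ℕ => 2 * C * M / n
        + M * ((∑ j ∈ Finset.Icc 1 (n - 1), |a (j + 1) - a j|) / n))
      atTop (nhds 0) := by
    have h1 : Tendsto (fun n : ℕ => 2 * C * M / n) atTop (nhds 0) :=
      tendsto_const_div_atTop_nhds_zero_nat _
    have h2 := hTV.const_mul M
    simpa using h1.add h2
  apply squeeze_zero' ?_ ?_ hbound
  · filter_upwards with n
    positivity
  · filter_upwards [eventually_ge_atTop 1] with n hn
    have hnpos : (0 : ℝ) < n := by exact_mod_cast hn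
    rw [div_le_iff₀ hnpos]
    calc ‖(∑ j ∈ Finset.Icc 1 n,
          (a j : ℂ) * Complex.exp (2 * j * θ * Complex.I))‖
        ≤ M * (2 * C + ∑ j ∈ Finset.Icc 1 (n - 1), |a (j + 1) - a j|) := key n hn
      _ = (2 * C * M / n + M * ((∑ j ∈ Finset.Icc 1 (n - 1), |a (j + 1) - a j|) / n)) * n := by
          field_simp
end

section
/- Suppose X = u v^T with ||v||_2 = 1, each u_j = Θ(1) bounded above and below by positive constants, Σ_{j=1}^{n−1}|u_{j+1}^2 − u_j^2| = o(n), and all angles θ_k, (θ_k ± θ_l)/2 (k ≠ l) are irrational multiples of π. Then ||R(X)||_2 / ||X||_2 → (1/√2)·max_{1≤k≤d/2} α_k as n → ∞, where α_k is the norm of the k-th 2D subvector of v. -/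
open scoped BigOperators
open Matrix Filter Finset

noncomputable def eNorm {ι : Type*} [Fintype ι] (v : ι → ℝ) : ℝ :=
  Real.sqrt (∑ i, (v i) ^ 2)

noncomputable def specNorm {ι κ : Type*} [Fintype ι] [Fintype κ]
    (X : Matrix ι κ ℝ) : ℝ :=
  sSup {c : ℝ | ∃ v : κ → ℝ, eNorm v = 1 ∧ c = eNorm (X.mulVec v)}

noncomputable def rot2 (φ : ℝ) : Matrix (Fin 2) (Fin 2) ℝ :=
  !![Real.cos φ, -Real.sin φ; Real.sin φ, Real.cos φ]

noncomputable def blockRot {m : ℕ} (φ : Fin m → ℝ) :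
    Matrix (Fin m × Fin 2) (Fin m × Fin 2) ℝ :=
  fun p q => if p.1 = q.1 then rot2 (φ p.1) p.2 q.2 else 0

noncomputable def ropeRot {m : ℕ} (θ : Fin m → ℝ) (j : ℕ) :
    Matrix (Fin m × Fin 2) (Fin m × Fin 2) ℝ :=
  blockRot (fun k => (j : ℝ) * θ k)

/-- RoPE applied row-wise to the rank-one matrix whose `j`-th row (position
`j = 1,…,n`) is `u_j v`. -/
noncomputable def ropeRankOne {n m : ℕ} (θ : Fin m → ℝ)
    (u : ℕ → ℝ) (v : Fin m × Fin 2 → ℝ) :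
    Matrix (Fin n) (Fin m × Fin 2) ℝ :=
  fun j => (ropeRot θ ((j : ℕ) + 1)).mulVec (u ((j : ℕ) + 1) • v)

private lemma geo_bound (z : ℂ) (hz : ‖z‖ = 1) (h1 : z ≠ 1) (n : ℕ) :
    ‖∑ j ∈ range n, z ^ (j + 1)‖ ≤ 2 / ‖z - 1‖ := by
  have hz1 : ‖z - 1‖ > 0 := by
    simp [norm_pos_iff, sub_eq_zero, h1]
  have : ∑ j ∈ range n, z ^ (j + 1) = z * ((z ^ n - 1) / (z - 1)) := by
    rw [← geom_sum_eq h1]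
    rw [Finset.mul_sum]
    exact Finset.sum_congr rfl fun i _ => by ring
  rw [this]
  rw [norm_mul, hz, one_mul, norm_div]
  rw [div_le_div_iff_of_pos_right hz1]
  calc ‖z ^ n - 1‖ ≤ ‖z ^ n‖ + ‖(1 : ℂ)‖ := norm_sub_le _ _
    _ = 2 := by simp [norm_pow, hz]; norm_num

private lemma abel_bound (a : ℕ → ℝ) (g : ℕ → ℂ) (C K : ℝ) (hK0 : 0 ≤ K)
    (hC : ∀ j, |a j| ≤ C)
    (hK : ∀ N, ‖∑ j ∈ range N, g j‖ ≤ K) (n : ℕ) :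
    ‖∑ i ∈ range n, (a (i + 1) : ℂ) * g i‖ ≤
      K * C + K * ∑ i ∈ range (n - 1), |a (i + 2) - a (i + 1)| := by
  have h := Finset.sum_range_by_parts (fun i => ((a (i + 1) : ℝ) : ℂ)) g n
  simp only [smul_eq_mul] at h
  rw [h]
  have h1 : ‖((a (n - 1 + 1) : ℝ) : ℂ) * ∑ i ∈ range n, g i‖ ≤ C * K := by
    rw [norm_mul, Complex.norm_real, Real.norm_eq_abs]
    exact mul_le_mul (hC _) (hK _) (norm_nonneg _) ((abs_nonneg _).trans (hC 0))
  have h2 : ‖∑ i ∈ range (n - 1),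
      (((a (i + 1 + 1) : ℝ) : ℂ) - ((a (i + 1) : ℝ) : ℂ)) * ∑ j ∈ range (i + 1), g j‖ ≤
      ∑ i ∈ range (n - 1), |a (i + 2) - a (i + 1)| * K := by
    refine (norm_sum_le _ _).trans (Finset.sum_le_sum fun i _ => ?_)
    rw [norm_mul, ← Complex.ofReal_sub, Complex.norm_real, Real.norm_eq_abs]
    exact mul_le_mul_of_nonneg_left (hK _) (abs_nonneg _)
  calc ‖_ - _‖ ≤ _ := norm_sub_le _ _
    _ ≤ C * K + ∑ i ∈ range (n - 1), |a (i + 2) - a (i + 1)| * K := add_le_add h1 h2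
    _ = K * C + K * ∑ i ∈ range (n - 1), |a (i + 2) - a (i + 1)| := by
        rw [← Finset.sum_mul]; ring

private lemma tv_reindex (h : ℕ → ℝ) (n : ℕ) :
    ∑ i ∈ range (n - 1), h (i + 1) = ∑ j ∈ Finset.Icc 1 (n - 1), h j := by
  rcases n with _ | n
  · simp
  · rw [← Finset.Ico_add_one_right_eq_Icc, Finset.sum_Ico_eq_sum_range]
    simp [add_comm]

private lemma osc_tendsto (u : ℕ → ℝ) (c₂ : ℝ) (hu2 : ∀ j, |u j| ≤ c₂)
    (hTV : Tendsto
      (fun n : ℕ => (∑ j ∈ Finset.Icc 1 (n - 1), |u (j + 1) ^ 2 - u j ^ 2|) / n)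
      atTop (nhds 0))
    (z : ℂ) (hz : ‖z‖ = 1) (h1 : z ≠ 1) :
    Tendsto (fun n : ℕ =>
      ‖∑ j ∈ range n, ((u (j + 1) ^ 2 : ℝ) : ℂ) * z ^ (j + 1)‖ / n) atTop (nhds 0) := by
  set K := 2 / ‖z - 1‖ with hKdef
  have hK0 : 0 ≤ K := by positivity
  have habs : ∀ j, |u j ^ 2| ≤ c₂ ^ 2 := fun j => by
    rw [abs_pow]
    exact pow_le_pow_left₀ (abs_nonneg _) (hu2 j) 2
  have hbound : ∀ n : ℕ, ‖∑ j ∈ range n, ((u (j + 1) ^ 2 : ℝ) : ℂ) * z ^ (j + 1)‖ ≤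
      K * c₂ ^ 2 + K * ∑ j ∈ Finset.Icc 1 (n - 1), |u (j + 1) ^ 2 - u j ^ 2| := by
    intro n
    have := abel_bound (fun j => u j ^ 2) (fun i => z ^ (i + 1)) (c₂ ^ 2) K hK0
      habs (fun N => geo_bound z hz h1 N) n
    rw [← tv_reindex (fun j => |u (j + 1) ^ 2 - u j ^ 2|) n]
    exact this
  have h0 : Tendsto (fun n : ℕ =>
      (K * c₂ ^ 2 + K * ∑ j ∈ Finset.Icc 1 (n - 1), |u (j + 1) ^ 2 - u j ^ 2|) / n)
      atTop (nhds 0) := by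
    have t1 : Tendsto (fun n : ℕ => K * c₂ ^ 2 / n) atTop (nhds 0) :=
      tendsto_const_div_atTop_nhds_zero_nat _
    have t2 : Tendsto (fun n : ℕ =>
        K * ((∑ j ∈ Finset.Icc 1 (n - 1), |u (j + 1) ^ 2 - u j ^ 2|) / n)) atTop
        (nhds (K * 0)) := hTV.const_mul K
    rw [mul_zero] at t2
    have := t1.add t2
    rw [add_zero] at this
    refine this.congr fun n => ?_
    ring
  refine squeeze_zero (fun n => by positivity) (fun n => ?_) h0
  rcases Nat.eq_zero_or_pos n with h | h
  · simp [h]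
  · exact div_le_div_of_nonneg_right (a := ‖∑ j ∈ range n, ((u (j + 1) ^ 2 : ℝ) : ℂ) * z ^ (j + 1)‖) (c := (n:ℝ)) (hbound n) (Nat.cast_nonneg n)

open Complex in
private noncomputable def zc {m : ℕ} (v : Fin m × Fin 2 → ℝ) (k : Fin m) : ℂ :=
  (v (k, 0) : ℂ) + (v (k, 1) : ℝ) * Complex.I

private noncomputable def εc : Fin 2 → ℂ := ![1, -Complex.I]

private lemma rope_row {m n : ℕ} (θ : Fin m → ℝ) (u : ℕ → ℝ)
    (v : Fin m × Fin 2 → ℝ) (j : Fin n) (p : Fin m × Fin 2) :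
    ropeRankOne (n := n) θ u v j p =
      u ((j : ℕ) + 1) *
        (εc p.2 * (Complex.exp ((((j : ℕ) + 1 : ℕ) : ℝ) * θ p.1 * Complex.I) *
          zc v p.1)).re := by
  obtain ⟨k, s⟩ := p
  simp only [ropeRankOne, ropeRot, blockRot, Matrix.mulVec, dotProduct,
    Fintype.sum_prod_type, Pi.smul_apply, smul_eq_mul]
  rw [Finset.sum_eq_single k]
  · simp only [if_pos rfl]
    fin_cases s <;>
      simp [rot2, zc, εc, Complex.exp_mul_I, Complex.mul_re, Complex.mul_im,
        Fin.sum_univ_two, Matrix.cons_val_zero, Matrix.cons_val_one, Matrix.head_cons,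
        ← Complex.ofReal_natCast, ← Complex.ofReal_mul, ← Complex.ofReal_add,
        Complex.cos_ofReal_re, Complex.sin_ofReal_re, Complex.cos_ofReal_im,
        Complex.sin_ofReal_im] <;>
      push_cast <;> ring
  · intro l _ hl
    simp [Ne.symm hl]
  · simp

private lemma re_mul_re (a b : ℂ) :
    a.re * b.re = ((a * b).re + (a * (starRingEnd ℂ) b).re) / 2 := by
  simp only [Complex.mul_re, Complex.conj_re, Complex.conj_im]
  ring

private noncomputable def Sc (u : ℕ → ℝ) (φ : ℝ) (n : ℕ) : ℂ :=
  ∑ j ∈ Finset.range n, ((u (j + 1) ^ 2 : ℝ) : ℂ) *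
    Complex.exp ((((j + 1 : ℕ) : ℝ) : ℂ) * (φ : ℂ) * Complex.I)

private lemma Sc_zero (u : ℕ → ℝ) (n : ℕ) :
    Sc u 0 n = ((∑ j ∈ Finset.range n, u (j + 1) ^ 2 : ℝ) : ℂ) := by
  rw [Sc]
  push_cast
  simp

private lemma Sc_norm_tendsto (u : ℕ → ℝ) (c₂ : ℝ) (hu2 : ∀ j, |u j| ≤ c₂)
    (hTV : Tendsto
      (fun n : ℕ => (∑ j ∈ Finset.Icc 1 (n - 1), |u (j + 1) ^ 2 - u j ^ 2|) / n)
      atTop (nhds 0))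
    (φ : ℝ) (hφ : Complex.exp ((φ : ℂ) * Complex.I) ≠ 1) :
    Tendsto (fun n : ℕ => ‖Sc u φ n‖ / n) atTop (nhds 0) := by
  have hz : ‖Complex.exp ((φ : ℂ) * Complex.I)‖ = 1 := by
    simp [Complex.norm_exp_ofReal_mul_I]
  have key : ∀ n : ℕ, Sc u φ n = ∑ j ∈ Finset.range n,
      ((u (j + 1) ^ 2 : ℝ) : ℂ) * Complex.exp ((φ : ℂ) * Complex.I) ^ (j + 1) := by
    intro n
    refine Finset.sum_congr rfl fun j _ => ?_
    rw [← Complex.exp_nat_mul]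
    congr 1
    push_cast
    ring
  have := osc_tendsto u c₂ hu2 hTV (Complex.exp ((φ : ℂ) * Complex.I)) hz hφ
  refine this.congr fun n => ?_
  rw [key]

private lemma exp_ne_one_of_irrational {φ : ℝ} (h : Irrational ((φ / 2) / Real.pi)) :
    Complex.exp ((φ : ℂ) * Complex.I) ≠ 1 := by
  intro hc
  rw [Complex.exp_eq_one_iff] at hc
  obtain ⟨q, hq⟩ := hc
  have h2 : (φ : ℂ) * Complex.I = ((q : ℂ) * 2 * (Real.pi : ℂ)) * Complex.I := by
    rw [hq]; ring
  have h3 : (φ : ℂ) = ((q : ℝ) * 2 * Real.pi : ℝ) := by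
    have := mul_right_cancel₀ Complex.I_ne_zero h2
    rw [this]; push_cast; ring
  have h4 : φ = (q : ℝ) * 2 * Real.pi := by exact_mod_cast h3
  have hπ : Real.pi ≠ 0 := Real.pi_ne_zero
  have h5 : (φ / 2) / Real.pi = (q : ℝ) := by
    rw [h4]; field_simp
  exact (h.ne_int q) h5

private lemma conj_exp_I (y : ℝ) :
    (starRingEnd ℂ) (Complex.exp ((y : ℂ) * Complex.I)) =
      Complex.exp (-((y : ℂ) * Complex.I)) := by
  rw [← Complex.exp_conj]
  congr 1
  simp [Complex.conj_I]

private lemma prod_re (θk θl : ℝ) (s t : Fin 2) (zk zl : ℂ) (x : ℝ) :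
    (εc s * (Complex.exp ((x : ℂ) * (θk : ℂ) * Complex.I) * zk)).re *
      (εc t * (Complex.exp ((x : ℂ) * (θl : ℂ) * Complex.I) * zl)).re =
    ((εc s * εc t * zk * zl *
        Complex.exp ((x : ℂ) * ((θk + θl : ℝ) : ℂ) * Complex.I)).re +
      (εc s * (starRingEnd ℂ) (εc t) * zk * (starRingEnd ℂ) zl *
        Complex.exp ((x : ℂ) * ((θk - θl : ℝ) : ℂ) * Complex.I)).re) / 2 := by
  have hc : (starRingEnd ℂ) (Complex.exp ((x : ℂ) * (θl : ℂ) * Complex.I)) =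
      Complex.exp (-((x : ℂ) * (θl : ℂ) * Complex.I)) := by
    rw [show (x : ℂ) * (θl : ℂ) * Complex.I = ((x * θl : ℝ) : ℂ) * Complex.I by
      push_cast; ring]
    exact conj_exp_I (x * θl)
  have hA : (εc s * (Complex.exp ((x : ℂ) * (θk : ℂ) * Complex.I) * zk)) *
      (εc t * (Complex.exp ((x : ℂ) * (θl : ℂ) * Complex.I) * zl)) =
      εc s * εc t * zk * zl *
        Complex.exp ((x : ℂ) * ((θk + θl : ℝ) : ℂ) * Complex.I) := by
    rw [show (x : ℂ) * ((θk + θl : ℝ) : ℂ) * Complex.I =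
        (x : ℂ) * (θk : ℂ) * Complex.I + (x : ℂ) * (θl : ℂ) * Complex.I by
      push_cast; ring, Complex.exp_add]
    ring
  have hB : (εc s * (Complex.exp ((x : ℂ) * (θk : ℂ) * Complex.I) * zk)) *
      (starRingEnd ℂ) (εc t * (Complex.exp ((x : ℂ) * (θl : ℂ) * Complex.I) * zl)) =
      εc s * (starRingEnd ℂ) (εc t) * zk * (starRingEnd ℂ) zl *
        Complex.exp ((x : ℂ) * ((θk - θl : ℝ) : ℂ) * Complex.I) := by
    rw [_root_.map_mul, _root_.map_mul, hc]
    rw [show (x : ℂ) * ((θk - θl : ℝ) : ℂ) * Complex.I =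
        (x : ℂ) * (θk : ℂ) * Complex.I + -((x : ℂ) * (θl : ℂ) * Complex.I) by
      push_cast; ring, Complex.exp_add]
    ring
  rw [re_mul_re, hA, hB]

private noncomputable def rowf {m : ℕ} (θ : Fin m → ℝ) (u : ℕ → ℝ)
    (v : Fin m × Fin 2 → ℝ) (j : ℕ) (p : Fin m × Fin 2) : ℝ :=
  u j * (εc p.2 * (Complex.exp (((j : ℝ) : ℂ) * ((θ p.1 : ℝ) : ℂ) * Complex.I) *
    zc v p.1)).re

private noncomputable def cP {m : ℕ} (v : Fin m × Fin 2 → ℝ) (p q : Fin m × Fin 2) : ℂ :=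
  εc p.2 * εc q.2 * zc v p.1 * zc v q.1

private noncomputable def cM {m : ℕ} (v : Fin m × Fin 2 → ℝ) (p q : Fin m × Fin 2) : ℂ :=
  εc p.2 * (starRingEnd ℂ) (εc q.2) * zc v p.1 * (starRingEnd ℂ) (zc v q.1)

private noncomputable def Gent {m : ℕ} (θ : Fin m → ℝ) (u : ℕ → ℝ)
    (v : Fin m × Fin 2 → ℝ) (n : ℕ) (p q : Fin m × Fin 2) : ℝ :=
  ∑ j ∈ Finset.range n, rowf θ u v (j + 1) p * rowf θ u v (j + 1) q

private lemma entry_formula {m : ℕ} (θ : Fin m → ℝ) (u : ℕ → ℝ)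
    (v : Fin m × Fin 2 → ℝ) (n : ℕ) (p q : Fin m × Fin 2) :
    Gent θ u v n p q =
      ((cP v p q * Sc u (θ p.1 + θ q.1) n).re +
        (cM v p q * Sc u (θ p.1 - θ q.1) n).re) / 2 := by
  unfold Gent Sc
  rw [Finset.mul_sum, Finset.mul_sum, Complex.re_sum, Complex.re_sum,
    ← Finset.sum_add_distrib, Finset.sum_div]
  refine Finset.sum_congr rfl fun j _ => ?_
  set x : ℝ := ((j + 1 : ℕ) : ℝ) with hx
  have e1 : (cP v p q * (((u (j + 1) ^ 2 : ℝ) : ℂ) *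
      Complex.exp ((x : ℂ) * ((θ p.1 + θ q.1 : ℝ) : ℂ) * Complex.I))).re =
      u (j + 1) ^ 2 * (cP v p q *
        Complex.exp ((x : ℂ) * ((θ p.1 + θ q.1 : ℝ) : ℂ) * Complex.I)).re := by
    rw [show cP v p q * (((u (j + 1) ^ 2 : ℝ) : ℂ) *
        Complex.exp ((x : ℂ) * ((θ p.1 + θ q.1 : ℝ) : ℂ) * Complex.I)) =
        ((u (j + 1) ^ 2 : ℝ) : ℂ) * (cP v p q *
        Complex.exp ((x : ℂ) * ((θ p.1 + θ q.1 : ℝ) : ℂ) * Complex.I)) by ring,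
      Complex.re_ofReal_mul]
  have e2 : (cM v p q * (((u (j + 1) ^ 2 : ℝ) : ℂ) *
      Complex.exp ((x : ℂ) * ((θ p.1 - θ q.1 : ℝ) : ℂ) * Complex.I))).re =
      u (j + 1) ^ 2 * (cM v p q *
        Complex.exp ((x : ℂ) * ((θ p.1 - θ q.1 : ℝ) : ℂ) * Complex.I)).re := by
    rw [show cM v p q * (((u (j + 1) ^ 2 : ℝ) : ℂ) *
        Complex.exp ((x : ℂ) * ((θ p.1 - θ q.1 : ℝ) : ℂ) * Complex.I)) =
        ((u (j + 1) ^ 2 : ℝ) : ℂ) * (cM v p q *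
        Complex.exp ((x : ℂ) * ((θ p.1 - θ q.1 : ℝ) : ℂ) * Complex.I)) by ring,
      Complex.re_ofReal_mul]
  rw [e1, e2]
  unfold rowf
  rw [show u (j + 1) * (εc p.2 * (Complex.exp ((((j + 1 : ℕ) : ℝ) : ℂ) *
        ((θ p.1 : ℝ) : ℂ) * Complex.I) * zc v p.1)).re *
      (u (j + 1) * (εc q.2 * (Complex.exp ((((j + 1 : ℕ) : ℝ) : ℂ) *
        ((θ q.1 : ℝ) : ℂ) * Complex.I) * zc v q.1)).re) =
      u (j + 1) ^ 2 * ((εc p.2 * (Complex.exp ((x : ℂ) * ((θ p.1 : ℝ) : ℂ) *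
        Complex.I) * zc v p.1)).re *
      (εc q.2 * (Complex.exp ((x : ℂ) * ((θ q.1 : ℝ) : ℂ) * Complex.I) *
        zc v q.1)).re) by rw [hx]; ring]
  rw [prod_re (θ p.1) (θ q.1) p.2 q.2 (zc v p.1) (zc v q.1) x]
  unfold cP cM
  ring

private lemma re_div_n_tendsto (c : ℂ) (S : ℕ → ℂ)
    (h : Tendsto (fun n : ℕ => ‖S n‖ / n) atTop (nhds 0)) :
    Tendsto (fun n : ℕ => (c * S n).re / n) atTop (nhds 0) := by
  have h' : Tendsto (fun n : ℕ => ‖c‖ * (‖S n‖ / n)) atTop (nhds (‖c‖ * 0)) :=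
    h.const_mul _
  rw [mul_zero] at h'
  refine squeeze_zero_norm (fun n => ?_) h'
  have hn : (0 : ℝ) ≤ (n : ℝ) := Nat.cast_nonneg n
  rw [Real.norm_eq_abs, abs_div, abs_of_nonneg hn, mul_div_assoc']
  apply div_le_div_of_nonneg_right _ hn
  calc |(c * S n).re| ≤ ‖c * S n‖ := Complex.abs_re_le_norm _
    _ = ‖c‖ * ‖S n‖ := norm_mul _ _

private noncomputable def sqs (u : ℕ → ℝ) (n : ℕ) : ℝ :=
  ∑ j ∈ Finset.range n, u (j + 1) ^ 2

private lemma cM_re_diag {m : ℕ} (v : Fin m × Fin 2 → ℝ) (p q : Fin m × Fin 2)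
    (hkl : p.1 = q.1) :
    (cM v p q).re = if p.2 = q.2 then v (p.1, 0) ^ 2 + v (p.1, 1) ^ 2 else 0 := by
  obtain ⟨k, s⟩ := p
  obtain ⟨l, t⟩ := q
  simp only at hkl
  subst hkl
  have hz : zc v k * (starRingEnd ℂ) (zc v k) =
      ((v (k, 0) ^ 2 + v (k, 1) ^ 2 : ℝ) : ℂ) := by
    rw [Complex.mul_conj]
    congr 1
    simp [zc, Complex.normSq_add_mul_I]
  have : cM v (k, s) (k, t) = εc s * (starRingEnd ℂ) (εc t) *
      ((v (k, 0) ^ 2 + v (k, 1) ^ 2 : ℝ) : ℂ) := by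
    unfold cM
    rw [← hz]; ring
  rw [this]
  fin_cases s <;> fin_cases t <;>
    simp [εc, Complex.mul_re, Complex.conj_re, Complex.conj_im, Complex.I_re,
      Complex.I_im, ← Complex.ofReal_pow] <;> ring

private lemma entry_tendsto {m : ℕ} (θ : Fin (m + 1) → ℝ)
    (v : Fin (m + 1) × Fin 2 → ℝ) (u : ℕ → ℝ) (c₂ : ℝ)
    (hu2 : ∀ j, |u j| ≤ c₂)
    (hTV : Tendsto
      (fun n : ℕ => (∑ j ∈ Finset.Icc 1 (n - 1), |u (j + 1) ^ 2 - u j ^ 2|) / n)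
      atTop (nhds 0))
    (hirr : ∀ k, Irrational (θ k / Real.pi))
    (hirr' : ∀ k l, k ≠ l →
      Irrational (((θ k + θ l) / 2) / Real.pi) ∧
      Irrational (((θ k - θ l) / 2) / Real.pi))
    (p q : Fin (m + 1) × Fin 2) :
    Tendsto (fun n : ℕ =>
      (Gent θ u v n p q -
        (if p = q then sqs u n * (v (p.1, 0) ^ 2 + v (p.1, 1) ^ 2) / 2 else 0)) / n)
      atTop (nhds 0) := by
  have hplus : Complex.exp (((θ p.1 + θ q.1 : ℝ) : ℂ) * Complex.I) ≠ 1 := by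
    by_cases hkl : p.1 = q.1
    · apply exp_ne_one_of_irrational
      have : (θ p.1 + θ q.1) / 2 = θ p.1 := by rw [hkl]; ring
      rw [this]
      exact hirr p.1
    · exact exp_ne_one_of_irrational (hirr' p.1 q.1 hkl).1
  have hSplus := Sc_norm_tendsto u c₂ hu2 hTV _ hplus
  by_cases hkl : p.1 = q.1
  · -- diagonal block
    have hS0 : ∀ n, Sc u (θ p.1 - θ q.1) n = ((sqs u n : ℝ) : ℂ) := by
      intro n
      rw [hkl, sub_self]
      exact Sc_zero u n
    have hconst : ∀ n, (cM v p q * Sc u (θ p.1 - θ q.1) n).re =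
        (if p = q then sqs u n * (v (p.1, 0) ^ 2 + v (p.1, 1) ^ 2) / 2 else 0) * 2 := by
      intro n
      rw [hS0, show cM v p q * ((sqs u n : ℝ) : ℂ) =
        ((sqs u n : ℝ) : ℂ) * cM v p q by ring, Complex.re_ofReal_mul,
        cM_re_diag v p q hkl]
      by_cases hst : p.2 = q.2
      · have hpq : p = q := Prod.ext hkl hst
        simp only [if_pos hst, if_pos hpq]
        ring
      · have hpq : p ≠ q := fun h => hst (by rw [h])
        simp [hst, hpq]
    have key : ∀ n, Gent θ u v n p q -
        (if p = q then sqs u n * (v (p.1, 0) ^ 2 + v (p.1, 1) ^ 2) / 2 else 0) =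
        (cP v p q * Sc u (θ p.1 + θ q.1) n).re / 2 := by
      intro n
      rw [entry_formula, hconst n]
      ring
    simp only [key]
    have := re_div_n_tendsto (cP v p q) _ hSplus
    have h2 := this.div_const 2
    rw [zero_div] at h2
    refine h2.congr fun n => ?_
    ring
  · -- off-diagonal block
    have hminus : Complex.exp (((θ p.1 - θ q.1 : ℝ) : ℂ) * Complex.I) ≠ 1 :=
      exp_ne_one_of_irrational (hirr' p.1 q.1 hkl).2
    have hSminus := Sc_norm_tendsto u c₂ hu2 hTV _ hminus
    have hpq : p ≠ q := fun h => hkl (by rw [h])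
    simp only [if_neg hpq, sub_zero]
    have t1 := re_div_n_tendsto (cP v p q) _ hSplus
    have t2 := re_div_n_tendsto (cM v p q) _ hSminus
    have := (t1.add t2).div_const 2
    rw [add_zero, zero_div] at this
    refine this.congr fun n => ?_
    rw [entry_formula]
    ring

private noncomputable def Qf {m : ℕ} (θ : Fin m → ℝ) (u : ℕ → ℝ)
    (v w : Fin m × Fin 2 → ℝ) (n : ℕ) : ℝ :=
  ∑ j ∈ Finset.range n, (∑ q, rowf θ u v (j + 1) q * w q) ^ 2

private lemma eNorm_mulVec_rope {m n : ℕ} (θ : Fin m → ℝ) (u : ℕ → ℝ)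
    (v w : Fin m × Fin 2 → ℝ) :
    eNorm ((ropeRankOne (n := n) θ u v).mulVec w) = Real.sqrt (Qf θ u v w n) := by
  unfold eNorm Qf
  congr 1
  rw [← Fin.sum_univ_eq_sum_range (fun j => (∑ q, rowf θ u v (j + 1) q * w q) ^ 2) n]
  refine Finset.sum_congr rfl fun j _ => ?_
  congr 1
  unfold Matrix.mulVec dotProduct
  refine Finset.sum_congr rfl fun q _ => ?_
  congr 1
  exact rope_row θ u v j q

private lemma Qf_expand {m : ℕ} (θ : Fin m → ℝ) (u : ℕ → ℝ)
    (v w : Fin m × Fin 2 → ℝ) (n : ℕ) :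
    Qf θ u v w n = ∑ p, ∑ q, w p * w q * Gent θ u v n p q := by
  unfold Qf Gent
  have h1 : ∀ j : ℕ, (∑ q, rowf θ u v (j + 1) q * w q) ^ 2 =
      ∑ p, ∑ q, w p * w q * (rowf θ u v (j + 1) p * rowf θ u v (j + 1) q) := by
    intro j
    rw [sq, Finset.sum_mul_sum]
    exact Finset.sum_congr rfl fun p _ =>
      Finset.sum_congr rfl fun q _ => by ring
  calc ∑ j ∈ Finset.range n, (∑ q, rowf θ u v (j + 1) q * w q) ^ 2
      = ∑ j ∈ Finset.range n, ∑ p, ∑ q,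
          w p * w q * (rowf θ u v (j + 1) p * rowf θ u v (j + 1) q) :=
        Finset.sum_congr rfl fun j _ => h1 j
    _ = ∑ p, ∑ j ∈ Finset.range n, ∑ q,
          w p * w q * (rowf θ u v (j + 1) p * rowf θ u v (j + 1) q) :=
        Finset.sum_comm
    _ = ∑ p, ∑ q, ∑ j ∈ Finset.range n,
          w p * w q * (rowf θ u v (j + 1) p * rowf θ u v (j + 1) q) :=
        Finset.sum_congr rfl fun p _ => Finset.sum_comm
    _ = _ := by
        refine Finset.sum_congr rfl fun p _ => Finset.sum_congr rfl fun q _ => ?_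
        rw [Finset.mul_sum]

private noncomputable def errn {m : ℕ} (θ : Fin m → ℝ) (u : ℕ → ℝ)
    (v : Fin m × Fin 2 → ℝ) (n : ℕ) : ℝ :=
  ∑ p, ∑ q, |Gent θ u v n p q -
    (if p = q then sqs u n * (v (p.1, 0) ^ 2 + v (p.1, 1) ^ 2) / 2 else 0)|

private lemma errn_tendsto {m : ℕ} (θ : Fin (m + 1) → ℝ)
    (v : Fin (m + 1) × Fin 2 → ℝ) (u : ℕ → ℝ) (c₂ : ℝ)
    (hu2 : ∀ j, |u j| ≤ c₂)
    (hTV : Tendsto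
      (fun n : ℕ => (∑ j ∈ Finset.Icc 1 (n - 1), |u (j + 1) ^ 2 - u j ^ 2|) / n)
      atTop (nhds 0))
    (hirr : ∀ k, Irrational (θ k / Real.pi))
    (hirr' : ∀ k l, k ≠ l →
      Irrational (((θ k + θ l) / 2) / Real.pi) ∧
      Irrational (((θ k - θ l) / 2) / Real.pi)) :
    Tendsto (fun n : ℕ => errn θ u v n / n) atTop (nhds 0) := by
  have h : ∀ p q : Fin (m + 1) × Fin 2, Tendsto (fun n : ℕ =>
      |Gent θ u v n p q -
        (if p = q then sqs u n * (v (p.1, 0) ^ 2 + v (p.1, 1) ^ 2) / 2 else 0)| / n)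
      atTop (nhds 0) := by
    intro p q
    have := (entry_tendsto θ v u c₂ hu2 hTV hirr hirr' p q).abs
    rw [abs_zero] at this
    refine this.congr fun n => ?_
    rw [abs_div, Nat.abs_cast]
  have hsum : Tendsto (fun n : ℕ => ∑ p : Fin (m + 1) × Fin 2,
      ∑ q : Fin (m + 1) × Fin 2, |Gent θ u v n p q -
        (if p = q then sqs u n * (v (p.1, 0) ^ 2 + v (p.1, 1) ^ 2) / 2 else 0)| / n)
      atTop (nhds 0) := by
    have := tendsto_finset_sum (Finset.univ : Finset (Fin (m + 1) × Fin 2))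
      (fun p _ => tendsto_finset_sum (Finset.univ : Finset (Fin (m + 1) × Fin 2))
        (fun q _ => h p q))
    simpa using this
  refine hsum.congr fun n => ?_
  rw [errn, Finset.sum_div]
  exact Finset.sum_congr rfl fun p _ => (Finset.sum_div _ _ _).symm

private lemma Q_close {m : ℕ} (θ : Fin m → ℝ) (u : ℕ → ℝ)
    (v w : Fin m × Fin 2 → ℝ) (hw : ∑ p, w p ^ 2 = 1) (n : ℕ) :
    |Qf θ u v w n -
      sqs u n / 2 * ∑ p, w p ^ 2 * (v (p.1, 0) ^ 2 + v (p.1, 1) ^ 2)| ≤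
      errn θ u v n := by
  have hw1 : ∀ p, |w p| ≤ 1 := by
    intro p
    have h1 : w p ^ 2 ≤ 1 := by
      rw [← hw]
      exact Finset.single_le_sum (fun q _ => sq_nonneg (w q)) (Finset.mem_univ p)
    nlinarith [abs_nonneg (w p), sq_abs (w p)]
  have hD : (∑ p, ∑ q, w p * w q *
      (if p = q then sqs u n * (v (p.1, 0) ^ 2 + v (p.1, 1) ^ 2) / 2 else 0)) =
      sqs u n / 2 * ∑ p, w p ^ 2 * (v (p.1, 0) ^ 2 + v (p.1, 1) ^ 2) := by
    rw [Finset.mul_sum]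
    refine Finset.sum_congr rfl fun p _ => ?_
    rw [Finset.sum_eq_single p]
    · rw [if_pos rfl]; ring
    · intro q _ hq; simp [Ne.symm hq]
    · simp
  rw [Qf_expand, ← hD, ← Finset.sum_sub_distrib]
  calc |∑ p, (∑ q, w p * w q * Gent θ u v n p q - ∑ q, w p * w q *
        (if p = q then sqs u n * (v (p.1, 0) ^ 2 + v (p.1, 1) ^ 2) / 2 else 0))|
      ≤ ∑ p, |∑ q, w p * w q * Gent θ u v n p q - ∑ q, w p * w q *
        (if p = q then sqs u n * (v (p.1, 0) ^ 2 + v (p.1, 1) ^ 2) / 2 else 0)| :=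
        Finset.abs_sum_le_sum_abs _ _
    _ ≤ errn θ u v n := by
        rw [errn]
        refine Finset.sum_le_sum fun p _ => ?_
        rw [← Finset.sum_sub_distrib]
        calc |∑ q, (w p * w q * Gent θ u v n p q - w p * w q *
              (if p = q then sqs u n * (v (p.1, 0) ^ 2 + v (p.1, 1) ^ 2) / 2 else 0))|
            ≤ ∑ q, |w p * w q * Gent θ u v n p q - w p * w q *
              (if p = q then sqs u n * (v (p.1, 0) ^ 2 + v (p.1, 1) ^ 2) / 2 else 0)| :=
              Finset.abs_sum_le_sum_abs _ _
          _ ≤ ∑ q, |Gent θ u v n p q -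
              (if p = q then sqs u n * (v (p.1, 0) ^ 2 + v (p.1, 1) ^ 2) / 2 else 0)| := by
              refine Finset.sum_le_sum fun q _ => ?_
              rw [← mul_sub, mul_assoc, abs_mul, abs_mul]
              have hA := abs_nonneg (Gent θ u v n p q -
                (if p = q then sqs u n * (v (p.1, 0) ^ 2 + v (p.1, 1) ^ 2) / 2 else 0))
              refine (mul_le_of_le_one_left (by positivity) (hw1 p)).trans ?_
              exact mul_le_of_le_one_left hA (hw1 q)

private lemma eNorm_one_sum_sq {ι : Type*} [Fintype ι] {w : ι → ℝ}
    (hw : eNorm w = 1) : ∑ p, w p ^ 2 = 1 := by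
  have h0 : (0 : ℝ) ≤ ∑ p, w p ^ 2 := Finset.sum_nonneg fun p _ => sq_nonneg _
  have := congrArg (fun x : ℝ => x ^ 2) hw
  simpa [eNorm, Real.sq_sqrt h0] using this

private lemma sqs_nonneg (u : ℕ → ℝ) (n : ℕ) : 0 ≤ sqs u n :=
  Finset.sum_nonneg fun j _ => sq_nonneg _

private lemma errn_nonneg {m : ℕ} (θ : Fin m → ℝ) (u : ℕ → ℝ)
    (v : Fin m × Fin 2 → ℝ) (n : ℕ) : 0 ≤ errn θ u v n :=
  Finset.sum_nonneg fun p _ => Finset.sum_nonneg fun q _ => abs_nonneg _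

private lemma specNorm_rope_bounds {m : ℕ} (θ : Fin (m + 1) → ℝ) (u : ℕ → ℝ)
    (v : Fin (m + 1) × Fin 2 → ℝ) (M : ℝ) (hM0 : 0 ≤ M)
    (hM2 : ∀ k, v (k, 0) ^ 2 + v (k, 1) ^ 2 ≤ M ^ 2)
    (k₀ : Fin (m + 1)) (hk₀ : v (k₀, 0) ^ 2 + v (k₀, 1) ^ 2 = M ^ 2) (n : ℕ) :
    Real.sqrt (max 0 (sqs u n / 2 * M ^ 2 - errn θ u v n)) ≤
        specNorm (ropeRankOne (n := n) θ u v) ∧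
      specNorm (ropeRankOne (n := n) θ u v) ≤
        Real.sqrt (sqs u n / 2 * M ^ 2 + errn θ u v n) := by
  classical
  set S := {c : ℝ | ∃ w : Fin (m + 1) × Fin 2 → ℝ, eNorm w = 1 ∧
    c = eNorm ((ropeRankOne (n := n) θ u v).mulVec w)} with hS
  have hub : ∀ c ∈ S, c ≤ Real.sqrt (sqs u n / 2 * M ^ 2 + errn θ u v n) := by
    rintro c ⟨w, hw, rfl⟩
    rw [eNorm_mulVec_rope]
    apply Real.sqrt_le_sqrt
    have hsum := eNorm_one_sum_sq hw
    have hQ := Q_close θ u v w hsum n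
    have hle : ∑ p, w p ^ 2 * (v (p.1, 0) ^ 2 + v (p.1, 1) ^ 2) ≤ M ^ 2 := by
      calc ∑ p, w p ^ 2 * (v (p.1, 0) ^ 2 + v (p.1, 1) ^ 2)
          ≤ ∑ p, w p ^ 2 * M ^ 2 :=
            Finset.sum_le_sum fun p _ =>
              mul_le_mul_of_nonneg_left (hM2 p.1) (sq_nonneg _)
        _ = M ^ 2 := by rw [← Finset.sum_mul, hsum, one_mul]
    have h1 : Qf θ u v w n ≤
        sqs u n / 2 * ∑ p, w p ^ 2 * (v (p.1, 0) ^ 2 + v (p.1, 1) ^ 2) +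
          errn θ u v n := by
      have := abs_le.mp hQ
      linarith [this.2]
    calc Qf θ u v w n ≤ _ := h1
      _ ≤ sqs u n / 2 * M ^ 2 + errn θ u v n := by
          have : sqs u n / 2 * ∑ p, w p ^ 2 * (v (p.1, 0) ^ 2 + v (p.1, 1) ^ 2) ≤
              sqs u n / 2 * M ^ 2 :=
            mul_le_mul_of_nonneg_left hle (by linarith [sqs_nonneg u n])
          linarith
  set e : Fin (m + 1) × Fin 2 → ℝ := fun p => if p = (k₀, 0) then 1 else 0 with he
  have hesum : ∑ p, e p ^ 2 = 1 := by
    rw [Finset.sum_eq_single (k₀, (0 : Fin 2))]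
    · simp [he]
    · intro q _ hq; simp [he, hq]
    · simp
  have hee : eNorm e = 1 := by
    rw [eNorm, hesum, Real.sqrt_one]
  have hmem : Real.sqrt (Qf θ u v e n) ∈ S :=
    ⟨e, hee, (eNorm_mulVec_rope θ u v e).symm⟩
  have hne : S.Nonempty := ⟨_, hmem⟩
  have hbdd : BddAbove S := ⟨_, hub⟩
  constructor
  · refine le_trans ?_ (le_csSup hbdd hmem)
    apply Real.sqrt_le_sqrt
    rw [max_le_iff]
    constructor
    · exact Finset.sum_nonneg fun j _ => sq_nonneg _
    · have hQ := Q_close θ u v e hesum n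
      have hsum : ∑ p, e p ^ 2 * (v (p.1, 0) ^ 2 + v (p.1, 1) ^ 2) = M ^ 2 := by
        rw [Finset.sum_eq_single (k₀, (0 : Fin 2))]
        · simp [he, hk₀]
        · intro q _ hq; simp [he, hq]
        · simp
      rw [hsum] at hQ
      linarith [(abs_le.mp hQ).1]
  · exact csSup_le hne hub

private lemma specNorm_rank_one {m n : ℕ} (v : Fin (m + 1) × Fin 2 → ℝ)
    (hv : eNorm v = 1) (u : ℕ → ℝ) :
    specNorm (Matrix.vecMulVec (fun j : Fin n => u ((j : ℕ) + 1)) v) =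
      Real.sqrt (sqs u n) := by
  classical
  have hv2 := eNorm_one_sum_sq hv
  have key : ∀ w : Fin (m + 1) × Fin 2 → ℝ,
      eNorm ((Matrix.vecMulVec (fun j : Fin n => u ((j : ℕ) + 1)) v).mulVec w) =
        |∑ q, v q * w q| * Real.sqrt (sqs u n) := by
    intro w
    rw [eNorm]
    have : ∀ j : Fin n,
        ((Matrix.vecMulVec (fun j : Fin n => u ((j : ℕ) + 1)) v).mulVec w) j =
          u ((j : ℕ) + 1) * ∑ q, v q * w q := by
      intro j
      simp only [Matrix.mulVec, dotProduct, Matrix.vecMulVec_apply]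
      rw [Finset.mul_sum]
      exact Finset.sum_congr rfl fun q _ => by ring
    calc Real.sqrt (∑ j, ((Matrix.vecMulVec (fun j : Fin n => u ((j : ℕ) + 1)) v).mulVec w) j ^ 2)
        = Real.sqrt ((∑ q, v q * w q) ^ 2 * sqs u n) := by
          congr 1
          rw [show (∑ q, v q * w q) ^ 2 * sqs u n =
            ∑ j ∈ Finset.range n, (∑ q, v q * w q) ^ 2 * u (j + 1) ^ 2 by
              rw [← Finset.mul_sum]; rfl]
          rw [← Fin.sum_univ_eq_sum_range
            (fun j => (∑ q, v q * w q) ^ 2 * u (j + 1) ^ 2) n]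
          refine Finset.sum_congr rfl fun j _ => ?_
          rw [this j]; ring
      _ = |∑ q, v q * w q| * Real.sqrt (sqs u n) := by
          rw [Real.sqrt_mul (sq_nonneg _), Real.sqrt_sq_eq_abs]
  have hub : ∀ c ∈ {c : ℝ | ∃ w : Fin (m + 1) × Fin 2 → ℝ, eNorm w = 1 ∧
      c = eNorm ((Matrix.vecMulVec (fun j : Fin n => u ((j : ℕ) + 1)) v).mulVec w)},
      c ≤ Real.sqrt (sqs u n) := by
    rintro c ⟨w, hw, rfl⟩
    rw [key w]
    have hcs : (∑ q, v q * w q) ^ 2 ≤ 1 := by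
      have := Finset.sum_mul_sq_le_sq_mul_sq Finset.univ v w
      rw [hv2, eNorm_one_sum_sq hw, one_mul] at this
      exact this
    have habs : |∑ q, v q * w q| ≤ 1 := by
      nlinarith [abs_nonneg (∑ q, v q * w q), sq_abs (∑ q, v q * w q)]
    calc |∑ q, v q * w q| * Real.sqrt (sqs u n)
        ≤ 1 * Real.sqrt (sqs u n) :=
          mul_le_mul_of_nonneg_right habs (Real.sqrt_nonneg _)
      _ = _ := one_mul _
  have hmem : Real.sqrt (sqs u n) ∈ {c : ℝ | ∃ w : Fin (m + 1) × Fin 2 → ℝ,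
      eNorm w = 1 ∧
      c = eNorm ((Matrix.vecMulVec (fun j : Fin n => u ((j : ℕ) + 1)) v).mulVec w)} := by
    refine ⟨v, hv, ?_⟩
    rw [key v]
    have : ∑ q, v q * v q = 1 := by
      rw [← hv2]
      exact Finset.sum_congr rfl fun q _ => (sq (v q)).symm ▸ by ring
    rw [this, abs_one, one_mul]
  exact le_antisymm (csSup_le ⟨_, hmem⟩ hub) (le_csSup ⟨_, hub⟩ hmem)

/-- Asymptotics of the spectral norm ratio under RoPE: for `X = u vᵀ` with
`‖v‖ = 1`, `u_j = Θ(1)`, sublinear total variation of `u_j²`, and all angles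
`θ_k` and `(θ_k ± θ_l)/2` irrational multiples of `π`,
`‖R(X)‖₂ / ‖X‖₂ → (1/√2) max_k α_k`. -/
theorem spectral_norm_ratio_limit (m : ℕ) (θ : Fin (m + 1) → ℝ)
    (v : Fin (m + 1) × Fin 2 → ℝ) (hv : eNorm v = 1)
    (u : ℕ → ℝ) (c₁ c₂ : ℝ) (hc₁ : 0 < c₁)
    (hu : ∀ j : ℕ, c₁ ≤ |u j| ∧ |u j| ≤ c₂)
    (hTV : Tendsto
      (fun n : ℕ => (∑ j ∈ Finset.Icc 1 (n - 1), |u (j + 1) ^ 2 - u j ^ 2|) / n)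
      atTop (nhds 0))
    (hirr : ∀ k, Irrational (θ k / Real.pi))
    (hirr' : ∀ k l, k ≠ l →
      Irrational (((θ k + θ l) / 2) / Real.pi) ∧
      Irrational (((θ k - θ l) / 2) / Real.pi)) :
    Tendsto
      (fun n : ℕ =>
        specNorm (ropeRankOne (n := n) θ u v) /
          specNorm (Matrix.vecMulVec (fun j : Fin n => u ((j : ℕ) + 1)) v))
      atTop
      (nhds ((1 / Real.sqrt 2) *
        ⨆ k : Fin (m + 1), Real.sqrt ((v (k, 0)) ^ 2 + (v (k, 1)) ^ 2))) := by
  classical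
  set M : ℝ := ⨆ k : Fin (m + 1), Real.sqrt ((v (k, 0)) ^ 2 + (v (k, 1)) ^ 2) with hM
  have hbdd : BddAbove (Set.range fun k : Fin (m + 1) =>
      Real.sqrt ((v (k, 0)) ^ 2 + (v (k, 1)) ^ 2)) :=
    Set.Finite.bddAbove (Set.finite_range _)
  have hMk : ∀ k, Real.sqrt ((v (k, 0)) ^ 2 + (v (k, 1)) ^ 2) ≤ M :=
    fun k => le_ciSup hbdd k
  have hM0 : 0 ≤ M := le_trans (Real.sqrt_nonneg _) (hMk 0)
  have hM2 : ∀ k, v (k, 0) ^ 2 + v (k, 1) ^ 2 ≤ M ^ 2 := by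
    intro k
    have h1 := hMk k
    nlinarith [Real.sq_sqrt (by positivity : (0:ℝ) ≤ v (k, 0) ^ 2 + v (k, 1) ^ 2),
      Real.sqrt_nonneg ((v (k, 0)) ^ 2 + (v (k, 1)) ^ 2)]
  obtain ⟨k₀, hk₀'⟩ := exists_eq_ciSup_of_finite
    (f := fun k : Fin (m + 1) => Real.sqrt ((v (k, 0)) ^ 2 + (v (k, 1)) ^ 2))
  have hk₀ : v (k₀, 0) ^ 2 + v (k₀, 1) ^ 2 = M ^ 2 := by
    rw [hM, ← hk₀', Real.sq_sqrt (by positivity)]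
  have hu2 : ∀ j, |u j| ≤ c₂ := fun j => (hu j).2
  -- error tendsto
  have herr := errn_tendsto θ v u c₂ hu2 hTV hirr hirr'
  -- lower bound on sqs
  have hsqs_lb : ∀ n : ℕ, c₁ ^ 2 * n ≤ sqs u n := by
    intro n
    have : ∀ j ∈ Finset.range n, c₁ ^ 2 ≤ u (j + 1) ^ 2 := by
      intro j _
      have h1 := (hu (j + 1)).1
      nlinarith [abs_nonneg (u (j + 1)), sq_abs (u (j + 1))]
    calc c₁ ^ 2 * n = (Finset.range n).card • (c₁ ^ 2) := by
          rw [Finset.card_range, nsmul_eq_mul]; ring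
      _ ≤ ∑ j ∈ Finset.range n, u (j + 1) ^ 2 := Finset.card_nsmul_le_sum _ _ _ this
  have hsqs_pos : ∀ n : ℕ, 1 ≤ n → 0 < sqs u n := by
    intro n hn
    have := hsqs_lb n
    have : (0:ℝ) < c₁ ^ 2 * n := by
      have : (1:ℝ) ≤ (n:ℝ) := by exact_mod_cast hn
      nlinarith
    linarith [hsqs_lb n]
  -- δ n := errn / sqs → 0
  set δ : ℕ → ℝ := fun n => errn θ u v n / sqs u n with hδdef
  have hδ0 : ∀ n, 1 ≤ n → 0 ≤ δ n := fun n hn =>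
    div_nonneg (errn_nonneg θ u v n) (hsqs_pos n hn).le
  have hδ : Tendsto δ atTop (nhds 0) := by
    have hupper : ∀ᶠ n : ℕ in atTop, δ n ≤ (errn θ u v n / n) / c₁ ^ 2 := by
      filter_upwards [eventually_ge_atTop 1] with n hn
      rw [hδdef]
      have h1 : c₁ ^ 2 * n ≤ sqs u n := hsqs_lb n
      have h2 : (0:ℝ) < c₁ ^ 2 * n := by
        have : (1:ℝ) ≤ (n:ℝ) := by exact_mod_cast hn
        nlinarith
      have h3 := errn_nonneg θ u v n
      rw [div_div, mul_comm (n:ℝ) (c₁ ^ 2)]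
      exact div_le_div_of_nonneg_left h3 h2 h1
    have hl : Tendsto (fun n : ℕ => (errn θ u v n / n) / c₁ ^ 2) atTop (nhds 0) := by
      have := herr.div_const (c₁ ^ 2)
      rwa [zero_div] at this
    refine squeeze_zero' ?_ hupper hl
    filter_upwards [eventually_ge_atTop 1] with n hn
    exact hδ0 n hn
  -- squeeze functions
  have hU : Tendsto (fun n : ℕ => Real.sqrt (M ^ 2 / 2 + δ n)) atTop
      (nhds ((1 / Real.sqrt 2) * M)) := by
    have := (tendsto_const_nhds (x := M ^ 2 / 2) (f := atTop (α := ℕ))).add hδ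
    rw [add_zero] at this
    have h2 := this.sqrt
    have h3 : Real.sqrt (M ^ 2 / 2) = (1 / Real.sqrt 2) * M := by
      rw [Real.sqrt_div (sq_nonneg M) 2, Real.sqrt_sq hM0]
      ring
    rwa [h3] at h2
  have hL : Tendsto (fun n : ℕ => Real.sqrt (max 0 (M ^ 2 / 2 - δ n))) atTop
      (nhds ((1 / Real.sqrt 2) * M)) := by
    have t1 : Tendsto (fun n : ℕ => M ^ 2 / 2 - δ n) atTop (nhds (M ^ 2 / 2)) := by
      have := (tendsto_const_nhds (x := M ^ 2 / 2) (f := atTop (α := ℕ))).sub hδ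
      rwa [sub_zero] at this
    have t2 := (tendsto_const_nhds (x := (0:ℝ)) (f := atTop (α := ℕ))).max t1
    have t3 := t2.sqrt
    rw [max_eq_right (by positivity : (0:ℝ) ≤ M ^ 2 / 2)] at t3
    have h3 : Real.sqrt (M ^ 2 / 2) = (1 / Real.sqrt 2) * M := by
      rw [Real.sqrt_div (sq_nonneg M) 2, Real.sqrt_sq hM0]
      ring
    rwa [h3] at t3
  -- eventual bounds
  refine tendsto_of_tendsto_of_tendsto_of_le_of_le' hL hU ?_ ?_
  · filter_upwards [eventually_ge_atTop 1] with n hn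
    have hs := hsqs_pos n hn
    have hb := (specNorm_rope_bounds θ u v M hM0 hM2 k₀ hk₀ n).1
    rw [specNorm_rank_one v hv u]
    have key : Real.sqrt (max 0 (M ^ 2 / 2 - δ n)) =
        Real.sqrt (max 0 (sqs u n / 2 * M ^ 2 - errn θ u v n)) / Real.sqrt (sqs u n) := by
      rw [← Real.sqrt_div (le_max_left _ _) (sqs u n)]
      congr 1
      have : max 0 (sqs u n / 2 * M ^ 2 - errn θ u v n) / sqs u n =
          max (0 / sqs u n) ((sqs u n / 2 * M ^ 2 - errn θ u v n) / sqs u n) := by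
        rcases le_total 0 (sqs u n / 2 * M ^ 2 - errn θ u v n) with h | h
        · rw [max_eq_right h, max_eq_right (div_le_div_of_nonneg_right h hs.le)]
        · rw [max_eq_left h, max_eq_left (div_le_div_of_nonneg_right h hs.le)]
      rw [this, zero_div]
      congr 1
      rw [hδdef]
      field_simp
    rw [key]
    apply div_le_div_of_nonneg_right hb (Real.sqrt_nonneg _) |>.trans_eq rfl
  · filter_upwards [eventually_ge_atTop 1] with n hn
    have hs := hsqs_pos n hn
    have hb := (specNorm_rope_bounds θ u v M hM0 hM2 k₀ hk₀ n).2
    rw [specNorm_rank_one v hv u]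
    have key : Real.sqrt (M ^ 2 / 2 + δ n) =
        Real.sqrt (sqs u n / 2 * M ^ 2 + errn θ u v n) / Real.sqrt (sqs u n) := by
      have hnum : (0:ℝ) ≤ sqs u n / 2 * M ^ 2 + errn θ u v n := by
        have := errn_nonneg θ u v n
        have := sqs_nonneg u n
        positivity
      rw [← Real.sqrt_div hnum (sqs u n)]
      congr 1
      rw [hδdef]
      field_simp
    rw [key]
    exact div_le_div_of_nonneg_right hb (Real.sqrt_nonneg _)
end

section
/- Under the same hypotheses ensuring ||R(X)||_2/||X||_2 → (1/√2)·max_k α_k with max_k α_k > 0, and using that RoPE preserves the Frobenius norm, the ratio of stable ranks satisfies srank(R(X))/srank(X) → 2/(max_k α_k^2), which lies in [2, d]. -/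
open scoped BigOperators
open Matrix Filter

noncomputable def frobNorm {ι κ : Type*} [Fintype ι] [Fintype κ]
    (X : Matrix ι κ ℝ) : ℝ :=
  Real.sqrt (∑ i, ∑ j, (X i j) ^ 2)

noncomputable def srank {ι κ : Type*} [Fintype ι] [Fintype κ]
    (X : Matrix ι κ ℝ) : ℝ :=
  frobNorm X ^ 2 / specNorm X ^ 2

open Finset

lemma geomS_eq (z : ℂ) (j : ℕ) :
    ∑ i ∈ Icc 1 j, z ^ i = (∑ i ∈ range (j+1), z ^ i) - 1 := by
  induction j with
  | zero => simp
  | succ j ih =>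
      rw [Finset.sum_Icc_succ_top (by omega), ih,
        Finset.sum_range_succ (fun i => z ^ i) (j+1)]
      ring

lemma geomS_bound (z : ℂ) (hz : z ≠ 1) (hz1 : ‖z‖ = 1) (j : ℕ) :
    ‖∑ i ∈ Icc 1 j, z ^ i‖ ≤ 2 / ‖z - 1‖ + 1 := by
  rw [geomS_eq]
  have h1 : ‖∑ i ∈ range (j+1), z ^ i‖ ≤ 2 / ‖z - 1‖ := by
    rw [geom_sum_eq hz]
    rw [norm_div]
    gcongr
    calc ‖z ^ (j+1) - 1‖ ≤ ‖z ^ (j+1)‖ + ‖(1:ℂ)‖ := norm_sub_le _ _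
      _ ≤ 2 := by rw [norm_pow, hz1]; norm_num
  calc ‖(∑ i ∈ range (j+1), z ^ i) - 1‖ ≤ ‖∑ i ∈ range (j+1), z ^ i‖ + ‖(1:ℂ)‖ :=
        norm_sub_le _ _
    _ ≤ 2 / ‖z - 1‖ + 1 := by rw [norm_one]; gcongr

lemma abel_icc (a : ℕ → ℝ) (z : ℂ) (n : ℕ) :
    ∑ j ∈ Icc 1 n, (a j : ℂ) * z ^ j
      = ∑ j ∈ Icc 1 (n-1), ((a j : ℂ) - a (j+1)) * (∑ i ∈ Icc 1 j, z ^ i)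
        + (a n : ℂ) * ∑ i ∈ Icc 1 n, z ^ i := by
  induction n with
  | zero => simp
  | succ n ih =>
      rcases Nat.eq_zero_or_pos n with h | h
      · subst h; simp [Finset.Icc_self]
      · have e1 : ∑ j ∈ Icc 1 (n+1), (a j : ℂ) * z ^ j
            = (∑ j ∈ Icc 1 n, (a j : ℂ) * z ^ j) + (a (n+1) : ℂ) * z ^ (n+1) :=
          Finset.sum_Icc_succ_top (by omega) _
        have e2 : ∑ i ∈ Icc 1 (n+1), z ^ i = (∑ i ∈ Icc 1 n, z ^ i) + z ^ (n+1) :=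
          Finset.sum_Icc_succ_top (by omega) _
        have e3 : ∑ j ∈ Icc 1 n, ((a j : ℂ) - a (j+1)) * (∑ i ∈ Icc 1 j, z ^ i)
            = (∑ j ∈ Icc 1 (n-1), ((a j : ℂ) - a (j+1)) * (∑ i ∈ Icc 1 j, z ^ i))
              + ((a n : ℂ) - a (n+1)) * (∑ i ∈ Icc 1 n, z ^ i) := by
          conv_lhs => rw [show n = n - 1 + 1 by omega]
          rw [Finset.sum_Icc_succ_top (by omega)]
          simp only [show n - 1 + 1 = n by omega]
        have h1 : n + 1 - 1 = n := rfl
        rw [e1, ih, h1, e3, e2]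
        ring

lemma abel_bound_s15 (a : ℕ → ℝ) (ca : ℝ) (hca : ∀ j, |a j| ≤ ca)
    (z : ℂ) (hz : z ≠ 1) (hz1 : ‖z‖ = 1) (n : ℕ) :
    ‖∑ j ∈ Icc 1 n, (a j : ℂ) * z ^ j‖
      ≤ (2 / ‖z - 1‖ + 1) * ((∑ j ∈ Icc 1 (n-1), |a (j+1) - a j|) + ca) := by
  set K := 2 / ‖z - 1‖ + 1 with hK
  have hK0 : 0 ≤ K := by positivity
  rw [abel_icc]
  calc ‖∑ j ∈ Icc 1 (n-1), ((a j : ℂ) - a (j+1)) * (∑ i ∈ Icc 1 j, z ^ i)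
        + (a n : ℂ) * ∑ i ∈ Icc 1 n, z ^ i‖
      ≤ ‖∑ j ∈ Icc 1 (n-1), ((a j : ℂ) - a (j+1)) * (∑ i ∈ Icc 1 j, z ^ i)‖
        + ‖(a n : ℂ) * ∑ i ∈ Icc 1 n, z ^ i‖ := norm_add_le _ _
    _ ≤ (∑ j ∈ Icc 1 (n-1), |a (j+1) - a j| * K) + ca * K := by
        gcongr
        · refine le_trans (norm_sum_le _ _) (Finset.sum_le_sum fun j _ => ?_)
          rw [norm_mul]
          have : ‖((a j : ℂ) - a (j+1))‖ = |a (j+1) - a j| := by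
            rw [← Complex.ofReal_sub, Complex.norm_real, Real.norm_eq_abs, abs_sub_comm]
          rw [this]
          exact mul_le_mul_of_nonneg_left (geomS_bound z hz hz1 j) (abs_nonneg _)
        · rw [norm_mul, Complex.norm_real, Real.norm_eq_abs]
          exact mul_le_mul (hca n) (geomS_bound z hz hz1 n) (norm_nonneg _)
            (le_trans (abs_nonneg _) (hca n))
    _ = K * ((∑ j ∈ Icc 1 (n-1), |a (j+1) - a j|) + ca) := by
        rw [← Finset.sum_mul]; ring

lemma div_le_div_of_nonneg_right' {a b c : ℝ} (h : a ≤ b) (hc : 0 < c) : a / c ≤ b / c := by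
  gcongr

lemma exp_ne_one_of_irr {s : ℝ} (h : Irrational (s / 2 / Real.pi)) :
    Complex.exp (s * Complex.I) ≠ 1 := by
  intro hc
  rw [Complex.exp_eq_one_iff] at hc
  obtain ⟨n, hn⟩ := hc
  have hI : (Complex.I : ℂ) ≠ 0 := Complex.I_ne_zero
  have hs : (s : ℂ) = n * (2 * Real.pi) := by
    have := mul_right_cancel₀ hI (by rw [hn]; ring :
      (s:ℂ) * Complex.I = (n * (2 * Real.pi)) * Complex.I)
    exact_mod_cast this
  have hs' : s = n * (2 * Real.pi) := by exact_mod_cast hs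
  have hpi : (Real.pi : ℝ) ≠ 0 := Real.pi_ne_zero
  have : s / 2 / Real.pi = (n : ℝ) := by rw [hs']; field_simp
  exact h.ne_int n this

lemma trig_decay (a : ℕ → ℝ) (ca : ℝ) (hca : ∀ j, |a j| ≤ ca)
    (hTV : Tendsto (fun n : ℕ => (∑ j ∈ Icc 1 (n-1), |a (j+1) - a j|) / n)
      atTop (nhds 0))
    (s : ℝ) (hs : Complex.exp (s * Complex.I) ≠ 1) :
    Tendsto (fun n : ℕ => (∑ j ∈ Icc 1 n, a j * Real.cos (j * s)) / n)
      atTop (nhds 0) ∧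
    Tendsto (fun n : ℕ => (∑ j ∈ Icc 1 n, a j * Real.sin (j * s)) / n)
      atTop (nhds 0) := by
  set z := Complex.exp (s * Complex.I) with hz
  have hz1 : ‖z‖ = 1 := by
    rw [hz, Complex.norm_exp]
    simp [Complex.mul_I_re, Complex.ofReal_im]
  have hzj : ∀ j : ℕ, z ^ j = Complex.exp ((j * s : ℝ) * Complex.I) := by
    intro j
    rw [hz, ← Complex.exp_nat_mul]
    push_cast
    ring_nf
  set Z : ℕ → ℂ := fun n => ∑ j ∈ Icc 1 n, (a j : ℂ) * z ^ j with hZ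
  have hre : ∀ n, (Z n).re = ∑ j ∈ Icc 1 n, a j * Real.cos (j * s) := by
    intro n
    rw [hZ]
    rw [Complex.re_sum]
    refine Finset.sum_congr rfl fun j _ => ?_
    rw [hzj j, Complex.re_ofReal_mul, Complex.exp_ofReal_mul_I_re]
  have him : ∀ n, (Z n).im = ∑ j ∈ Icc 1 n, a j * Real.sin (j * s) := by
    intro n
    rw [hZ]
    rw [Complex.im_sum]
    refine Finset.sum_congr rfl fun j _ => ?_
    rw [hzj j, Complex.im_ofReal_mul, Complex.exp_ofReal_mul_I_im]
  set K := 2 / ‖z - 1‖ + 1 with hK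
  have hK0 : (0:ℝ) ≤ K := by positivity
  have hbound : ∀ n : ℕ, ‖Z n‖ ≤ K * ((∑ j ∈ Icc 1 (n-1), |a (j+1) - a j|) + ca) :=
    fun n => abel_bound_s15 a ca hca z hs hz1 n
  have hg : Tendsto (fun n : ℕ =>
      (K * ((∑ j ∈ Icc 1 (n-1), |a (j+1) - a j|) + ca)) / n) atTop (nhds 0) := by
    have h1 : Tendsto (fun n : ℕ =>
        K * ((∑ j ∈ Icc 1 (n-1), |a (j+1) - a j|) / n) + (K * ca) / n)
        atTop (nhds 0) := by
      have := (hTV.const_mul K).add (tendsto_const_div_atTop_nhds_zero_nat (K * ca))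
      simpa using this
    refine h1.congr fun n => ?_
    field_simp
  have key : ∀ f : ℕ → ℝ,
      (∀ n : ℕ, |f n| ≤ K * ((∑ j ∈ Icc 1 (n-1), |a (j+1) - a j|) + ca)) →
      Tendsto (fun n : ℕ => f n / n) atTop (nhds 0) := by
    intro f hf
    apply squeeze_zero_norm _ hg
    intro n
    rw [Real.norm_eq_abs, abs_div, Nat.abs_cast]
    rcases Nat.eq_zero_or_pos n with h | h
    · subst h; simp
    · have hn : (0:ℝ) < (n:ℝ) := by exact_mod_cast h
      exact div_le_div_of_nonneg_right' (hf n) hn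
  constructor
  · refine key _ fun n => ?_
    rw [← hre]
    exact le_trans (Complex.abs_re_le_norm _)
      (by exact hbound n)
  · refine key _ fun n => ?_
    rw [← him]
    exact le_trans (Complex.abs_im_le_norm _)
      (by exact hbound n)

lemma eNorm_sq_eq {ι : Type*} [Fintype ι] {w : ι → ℝ} (h : eNorm w = 1) :
    ∑ i, (w i)^2 = 1 := by
  have h0 : (0:ℝ) ≤ ∑ i, (w i)^2 := Finset.sum_nonneg fun i _ => sq_nonneg _
  have := congrArg (· ^ 2) h
  simpa [eNorm, Real.sq_sqrt h0] using this

lemma eNorm_nonneg {ι : Type*} [Fintype ι] (w : ι → ℝ) : 0 ≤ eNorm w :=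
  Real.sqrt_nonneg _

lemma frobNorm_sq {ι κ : Type*} [Fintype ι] [Fintype κ] (X : Matrix ι κ ℝ) :
    frobNorm X ^ 2 = ∑ i, ∑ j, (X i j)^2 :=
  Real.sq_sqrt (Finset.sum_nonneg fun i _ => Finset.sum_nonneg fun j _ => sq_nonneg _)

lemma specNorm_sq_sandwich {ι κ : Type*} [Fintype ι] [Fintype κ]
    (X : Matrix ι κ ℝ) (c ε : ℝ) (hε : 0 ≤ ε) (hc : 0 ≤ c)
    (hub : ∀ w : κ → ℝ, eNorm w = 1 → ∑ i, (X.mulVec w i)^2 ≤ c + ε)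
    (hlb : ∃ w : κ → ℝ, eNorm w = 1 ∧ c - ε ≤ ∑ i, (X.mulVec w i)^2) :
    |specNorm X ^ 2 - c| ≤ ε := by
  set S := {c : ℝ | ∃ v : κ → ℝ, eNorm v = 1 ∧ c = eNorm (X.mulVec v)} with hS
  obtain ⟨w₀, hw₀, hw₀lb⟩ := hlb
  have hmem : eNorm (X.mulVec w₀) ∈ S := ⟨w₀, hw₀, rfl⟩
  have hSne : S.Nonempty := ⟨_, hmem⟩
  have hubS : ∀ y ∈ S, y ≤ Real.sqrt (c + ε) := by
    rintro y ⟨w, hw, rfl⟩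
    rw [eNorm]
    exact Real.sqrt_le_sqrt (hub w hw)
  have hbdd : BddAbove S := ⟨Real.sqrt (c + ε), hubS⟩
  have hspec_le : specNorm X ≤ Real.sqrt (c + ε) := csSup_le hSne hubS
  have hspec_ge : Real.sqrt (∑ i, (X.mulVec w₀ i)^2) ≤ specNorm X := by
    exact le_csSup hbdd hmem
  have hspec0 : 0 ≤ specNorm X := le_trans (Real.sqrt_nonneg _) hspec_ge
  have h1 : specNorm X ^ 2 ≤ c + ε := by
    calc specNorm X ^ 2 ≤ Real.sqrt (c + ε) ^ 2 := by
          exact pow_le_pow_left₀ hspec0 hspec_le 2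
      _ = c + ε := Real.sq_sqrt (by linarith)
  have h2 : c - ε ≤ specNorm X ^ 2 := by
    have hq0 : (0:ℝ) ≤ ∑ i, (X.mulVec w₀ i)^2 := Finset.sum_nonneg fun i _ => sq_nonneg _
    calc c - ε ≤ ∑ i, (X.mulVec w₀ i)^2 := hw₀lb
      _ = Real.sqrt (∑ i, (X.mulVec w₀ i)^2) ^ 2 := (Real.sq_sqrt hq0).symm
      _ ≤ specNorm X ^ 2 := pow_le_pow_left₀ (Real.sqrt_nonneg _) hspec_ge 2
  rw [abs_sub_le_iff]
  constructor <;> linarith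

lemma specNorm_vecMulVec {ι κ : Type*} [Fintype ι] [Fintype κ]
    (u' : ι → ℝ) (v : κ → ℝ) (hv : eNorm v = 1) :
    specNorm (Matrix.vecMulVec u' v) = eNorm u' := by
  have hv2 : ∑ j, (v j)^2 = 1 := eNorm_sq_eq hv
  have hmv : ∀ w : κ → ℝ, (Matrix.vecMulVec u' v).mulVec w
      = fun i => u' i * ∑ j, v j * w j := by
    intro w
    funext i
    simp [Matrix.mulVec, dotProduct, Matrix.vecMulVec_apply, Finset.mul_sum, mul_assoc]
  have hnorm : ∀ w : κ → ℝ, eNorm ((Matrix.vecMulVec u' v).mulVec w)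
      = |∑ j, v j * w j| * eNorm u' := by
    intro w
    rw [hmv, eNorm, eNorm]
    rw [show ∑ i, (u' i * ∑ j, v j * w j)^2 = (∑ j, v j * w j)^2 * ∑ i, (u' i)^2 by
      rw [Finset.mul_sum]; exact Finset.sum_congr rfl fun i _ => by ring]
    rw [Real.sqrt_mul (sq_nonneg _), Real.sqrt_sq_eq_abs]
  apply le_antisymm
  · apply csSup_le
    · exact ⟨_, v, hv, rfl⟩
    · rintro y ⟨w, hw, rfl⟩
      rw [hnorm w]
      have hcs : (∑ j, v j * w j)^2 ≤ 1 := by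
        have := Finset.sum_mul_sq_le_sq_mul_sq Finset.univ v w
        rw [hv2, eNorm_sq_eq hw] at this
        simpa using this
      have : |∑ j, v j * w j| ≤ 1 := by
        nlinarith [abs_nonneg (∑ j, v j * w j), sq_abs (∑ j, v j * w j)]
      calc |∑ j, v j * w j| * eNorm u' ≤ 1 * eNorm u' :=
            mul_le_mul_of_nonneg_right this (eNorm_nonneg _)
        _ = eNorm u' := one_mul _
  · have : eNorm ((Matrix.vecMulVec u' v).mulVec v) = eNorm u' := by
      rw [hnorm v]
      rw [show ∑ j, v j * v j = 1 by simpa [pow_two] using hv2]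
      simp
    rw [← this]
    apply le_csSup
    · refine ⟨eNorm u', ?_⟩
      rintro y ⟨w, hw, rfl⟩
      rw [hnorm w]
      have hcs : (∑ j, v j * w j)^2 ≤ 1 := by
        have := Finset.sum_mul_sq_le_sq_mul_sq Finset.univ v w
        rw [hv2, eNorm_sq_eq hw] at this
        simpa using this
      have : |∑ j, v j * w j| ≤ 1 := by
        nlinarith [abs_nonneg (∑ j, v j * w j), sq_abs (∑ j, v j * w j)]
      calc |∑ j, v j * w j| * eNorm u' ≤ 1 * eNorm u' :=
            mul_le_mul_of_nonneg_right this (eNorm_nonneg _)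
        _ = eNorm u' := one_mul _
    · exact ⟨v, hv, rfl⟩

lemma ropeRot_mulVec {m : ℕ} (θ : Fin m → ℝ) (j : ℕ)
    (v : Fin m × Fin 2 → ℝ) (k : Fin m) :
    ((ropeRot θ j).mulVec v) (k, 0)
      = Real.cos (j * θ k) * v (k,0) - Real.sin (j * θ k) * v (k,1)
    ∧ ((ropeRot θ j).mulVec v) (k, 1)
      = Real.sin (j * θ k) * v (k,0) + Real.cos (j * θ k) * v (k,1) := by
  constructor <;>
  · simp [ropeRot, blockRot, Matrix.mulVec, dotProduct, Fintype.sum_prod_type,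
      rot2, Fin.sum_univ_two, Finset.sum_ite_eq, Finset.sum_ite_eq']
    try ring

lemma sq_sum_trig {d : ℕ} (x A B : Fin d → ℝ) :
    (∑ k, (Real.cos (x k) * A k + Real.sin (x k) * B k))^2
      = ∑ k, ∑ l, ((A k * A l + B k * B l) * Real.cos (x k - x l)
        + (A k * A l - B k * B l) * Real.cos (x k + x l)
        + (A k * B l + B k * A l) * Real.sin (x k + x l)
        + (B k * A l - A k * B l) * Real.sin (x k - x l)) / 2 := by
  rw [sq, Finset.sum_mul_sum]
  refine Finset.sum_congr rfl fun k _ => Finset.sum_congr rfl fun l _ => ?_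
  rw [Real.cos_sub, Real.cos_add, Real.sin_add, Real.sin_sub]
  ring

lemma mulVec_ropeRankOne {n m : ℕ} (θ : Fin m → ℝ) (u : ℕ → ℝ)
    (v w : Fin m × Fin 2 → ℝ) (j : Fin n) :
    (ropeRankOne (n:=n) θ u v).mulVec w j
      = u ((j:ℕ)+1) * ∑ k, (Real.cos (((j:ℕ)+1) * θ k) * (v (k,0) * w (k,0) + v (k,1) * w (k,1))
          + Real.sin (((j:ℕ)+1) * θ k) * (v (k,0) * w (k,1) - v (k,1) * w (k,0))) := by
  have hX : ∀ p, ropeRankOne (n:=n) θ u v j p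
      = u ((j:ℕ)+1) * ((ropeRot θ ((j:ℕ)+1)).mulVec v p) := by
    intro p
    simp [ropeRankOne, Matrix.mulVec_smul]
  rw [Matrix.mulVec, dotProduct]
  rw [Finset.sum_congr rfl fun p _ => by rw [hX p]]
  rw [Fintype.sum_prod_type]
  rw [Finset.mul_sum]
  refine Finset.sum_congr rfl fun k _ => ?_
  rw [Fin.sum_univ_two]
  rw [(ropeRot_mulVec θ ((j:ℕ)+1) v k).1, (ropeRot_mulVec θ ((j:ℕ)+1) v k).2]
  push_cast
  ring

lemma ropeRot_norm {m : ℕ} (θ : Fin m → ℝ) (j : ℕ) (v : Fin m × Fin 2 → ℝ) :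
    ∑ p, ((ropeRot θ j).mulVec v p)^2 = ∑ p, (v p)^2 := by
  rw [Fintype.sum_prod_type, Fintype.sum_prod_type]
  refine Finset.sum_congr rfl fun k _ => ?_
  rw [Fin.sum_univ_two, Fin.sum_univ_two,
    (ropeRot_mulVec θ j v k).1, (ropeRot_mulVec θ j v k).2]
  have h := Real.sin_sq_add_cos_sq (j * θ k)
  nlinarith [h]

lemma sq_sum_trig' {d : ℕ} (x A B : Fin d → ℝ) :
    (∑ k, (Real.cos (x k) * A k + Real.sin (x k) * B k))^2
      = ∑ k, ∑ l, ((A k * A l + B k * B l) * Real.cos (x k - x l)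
        + (A k * A l - B k * B l) * Real.cos (x k + x l)
        + (A k * B l + B k * A l) * Real.sin (x k + x l)
        + (B k * A l - A k * B l) * Real.sin (x k - x l)) / 2 := by
  rw [sq, Finset.sum_mul_sum]
  refine Finset.sum_congr rfl fun k _ => Finset.sum_congr rfl fun l _ => ?_
  rw [Real.cos_sub, Real.cos_add, Real.sin_add, Real.sin_sub]
  ring

lemma sum_fin_shift (f : ℕ → ℝ) (n : ℕ) :
    ∑ j : Fin n, f ((j : ℕ) + 1) = ∑ j ∈ Icc 1 n, f j := by
  rw [Fin.sum_univ_eq_sum_range (fun j => f (j + 1)) n]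
  rw [show Icc 1 n = Ico 1 (n+1) by rfl]
  rw [Finset.sum_Ico_eq_sum_range]
  simp [add_comm]

lemma key_expand (a : ℕ → ℝ) {d : ℕ} (θ A B : Fin d → ℝ) (n : ℕ) :
    ∑ j ∈ Icc 1 n, a j * (∑ k, (Real.cos (j * θ k) * A k + Real.sin (j * θ k) * B k))^2
    = ∑ k, ∑ l,
        ((A k * A l + B k * B l) * (∑ j ∈ Icc 1 n, a j * Real.cos (j * (θ k - θ l)))
        + (A k * A l - B k * B l) * (∑ j ∈ Icc 1 n, a j * Real.cos (j * (θ k + θ l)))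
        + (A k * B l + B k * A l) * (∑ j ∈ Icc 1 n, a j * Real.sin (j * (θ k + θ l)))
        + (B k * A l - A k * B l) * (∑ j ∈ Icc 1 n, a j * Real.sin (j * (θ k - θ l)))) / 2 := by
  have h1 : ∀ j ∈ Icc 1 n,
      a j * (∑ k, (Real.cos (j * θ k) * A k + Real.sin (j * θ k) * B k))^2
      = ∑ k, ∑ l,
          (a j * ((A k * A l + B k * B l) * Real.cos (j * (θ k - θ l))
          + (A k * A l - B k * B l) * Real.cos (j * (θ k + θ l))
          + (A k * B l + B k * A l) * Real.sin (j * (θ k + θ l))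
          + (B k * A l - A k * B l) * Real.sin (j * (θ k - θ l))) / 2) := by
    intro j _
    rw [sq_sum_trig' (fun k => (j:ℝ) * θ k) A B, Finset.mul_sum]
    refine Finset.sum_congr rfl fun k _ => ?_
    rw [Finset.mul_sum]
    refine Finset.sum_congr rfl fun l _ => ?_
    rw [show (j:ℝ) * (θ k - θ l) = (j:ℝ) * θ k - (j:ℝ) * θ l by ring,
      show (j:ℝ) * (θ k + θ l) = (j:ℝ) * θ k + (j:ℝ) * θ l by ring]
    ring
  rw [Finset.sum_congr rfl h1, Finset.sum_comm]
  refine Finset.sum_congr rfl fun k _ => ?_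
  rw [Finset.sum_comm]
  refine Finset.sum_congr rfl fun l _ => ?_
  rw [Finset.mul_sum, Finset.mul_sum, Finset.mul_sum, Finset.mul_sum,
    ← Finset.sum_add_distrib, ← Finset.sum_add_distrib, ← Finset.sum_add_distrib,
    ← Finset.sum_div]
  refine congrArg (· / 2) (Finset.sum_congr rfl fun j _ => ?_)
  ring


lemma abs_dot_le (x0 x1 y0 y1 : ℝ) (hx : x0^2 + x1^2 ≤ 1) (hy : y0^2 + y1^2 ≤ 1) :
    |x0*y0 + x1*y1| ≤ 1 := by
  nlinarith [sq_nonneg (x0*y1 - x1*y0), abs_nonneg (x0*y0 + x1*y1),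
    sq_abs (x0*y0 + x1*y1), sq_nonneg x0, sq_nonneg x1, sq_nonneg y0, sq_nonneg y1,
    sq_nonneg (x0*y0 + x1*y1)]

lemma coeff_bound {a b c d : ℝ} (ha : |a| ≤ 1) (hb : |b| ≤ 1) (hc : |c| ≤ 1)
    (hd : |d| ≤ 1) : |a*b + c*d| ≤ 2 := by
  calc |a*b + c*d| ≤ |a*b| + |c*d| := abs_add_le _ _
    _ = |a| * |b| + |c| * |d| := by rw [abs_mul, abs_mul]
    _ ≤ 1*1 + 1*1 := add_le_add (mul_le_mul ha hb (abs_nonneg _) zero_le_one)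
        (mul_le_mul hc hd (abs_nonneg _) zero_le_one)
    _ = 2 := by norm_num

lemma coeff_bound' {a b c d : ℝ} (ha : |a| ≤ 1) (hb : |b| ≤ 1) (hc : |c| ≤ 1)
    (hd : |d| ≤ 1) : |a*b - c*d| ≤ 2 := by
  have := coeff_bound ha hb hc (abs_neg d ▸ hd)
  rw [show a*b + c*(-d) = a*b - c*d by ring] at this
  exact this

lemma four_term_bound {A1 A2 B1 B2 e1 e2 e3 e4 : ℝ} (hA1 : |A1| ≤ 1) (hA2 : |A2| ≤ 1)
    (hB1 : |B1| ≤ 1) (hB2 : |B2| ≤ 1) :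
    |((A1*A2 + B1*B2)*e1 + (A1*A2 - B1*B2)*e2 + (A1*B2 + B1*A2)*e3
      + (B1*A2 - A1*B2)*e4)/2| ≤ |e1| + |e2| + |e3| + |e4| := by
  have h1 : |A1*A2 + B1*B2| ≤ 2 := coeff_bound hA1 hA2 hB1 hB2
  have h2 : |A1*A2 - B1*B2| ≤ 2 := coeff_bound' hA1 hA2 hB1 hB2
  have h3 : |A1*B2 + B1*A2| ≤ 2 := coeff_bound hA1 hB2 hB1 hA2
  have h4 : |B1*A2 - A1*B2| ≤ 2 := coeff_bound' hB1 hA2 hA1 hB2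
  have habs : |((A1*A2 + B1*B2)*e1 + (A1*A2 - B1*B2)*e2 + (A1*B2 + B1*A2)*e3
      + (B1*A2 - A1*B2)*e4)| ≤ 2*|e1| + 2*|e2| + 2*|e3| + 2*|e4| := by
    calc |((A1*A2 + B1*B2)*e1 + (A1*A2 - B1*B2)*e2 + (A1*B2 + B1*A2)*e3
        + (B1*A2 - A1*B2)*e4)|
        ≤ |(A1*A2 + B1*B2)*e1 + (A1*A2 - B1*B2)*e2 + (A1*B2 + B1*A2)*e3|
          + |(B1*A2 - A1*B2)*e4| := abs_add_le _ _
      _ ≤ (|(A1*A2 + B1*B2)*e1 + (A1*A2 - B1*B2)*e2| + |(A1*B2 + B1*A2)*e3|)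
          + |(B1*A2 - A1*B2)*e4| := by gcongr; exact abs_add_le _ _
      _ ≤ ((|(A1*A2 + B1*B2)*e1| + |(A1*A2 - B1*B2)*e2|) + |(A1*B2 + B1*A2)*e3|)
          + |(B1*A2 - A1*B2)*e4| := by gcongr; exact abs_add_le _ _
      _ ≤ 2*|e1| + 2*|e2| + 2*|e3| + 2*|e4| := by
          rw [abs_mul, abs_mul, abs_mul, abs_mul]
          have := abs_nonneg e1
          have := abs_nonneg e2
          have := abs_nonneg e3
          have := abs_nonneg e4
          nlinarith [abs_nonneg (A1*A2 + B1*B2), abs_nonneg (A1*A2 - B1*B2),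
            abs_nonneg (A1*B2 + B1*A2), abs_nonneg (B1*A2 - A1*B2)]
  calc |((A1*A2 + B1*B2)*e1 + (A1*A2 - B1*B2)*e2 + (A1*B2 + B1*A2)*e3
      + (B1*A2 - A1*B2)*e4)/2|
      = |((A1*A2 + B1*B2)*e1 + (A1*A2 - B1*B2)*e2 + (A1*B2 + B1*A2)*e3
        + (B1*A2 - A1*B2)*e4)|/2 := by rw [abs_div]; norm_num
    _ ≤ (2*|e1| + 2*|e2| + 2*|e3| + 2*|e4|)/2 := by gcongr
    _ = |e1| + |e2| + |e3| + |e4| := by ring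


lemma double_sum_abs_est {d : Type*} [Fintype d] (X Y E : d → d → ℝ)
    (h : ∀ k l, |X k l - Y k l| ≤ E k l) :
    |(∑ k, ∑ l, X k l) - (∑ k, ∑ l, Y k l)| ≤ ∑ k, ∑ l, E k l := by
  calc |(∑ k, ∑ l, X k l) - (∑ k, ∑ l, Y k l)|
      = |∑ k, ((∑ l, X k l) - (∑ l, Y k l))| := by rw [Finset.sum_sub_distrib]
    _ ≤ ∑ k, |(∑ l, X k l) - (∑ l, Y k l)| := Finset.abs_sum_le_sum_abs _ _
    _ ≤ ∑ k, ∑ l, E k l := by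
        refine Finset.sum_le_sum fun k _ => ?_
        calc |(∑ l, X k l) - (∑ l, Y k l)| = |∑ l, (X k l - Y k l)| := by
              rw [Finset.sum_sub_distrib]
          _ ≤ ∑ l, |X k l - Y k l| := Finset.abs_sum_le_sum_abs _ _
          _ ≤ ∑ l, E k l := Finset.sum_le_sum fun l _ => h k l

set_option maxHeartbeats 2000000 in
/-- Under the hypotheses ensuring `‖R(X)‖₂/‖X‖₂ → (1/√2) max_k α_k`, with
`max_k α_k > 0`, the stable rank ratio converges:
`srank(R(X))/srank(X) → 2 / max_k α_k²`, which lies in `[2, d]`. -/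
theorem stable_rank_ratio_limit (m : ℕ) (θ : Fin (m + 1) → ℝ)
    (v : Fin (m + 1) × Fin 2 → ℝ) (hv : eNorm v = 1)
    (u : ℕ → ℝ) (c₁ c₂ : ℝ) (hc₁ : 0 < c₁)
    (hu : ∀ j : ℕ, c₁ ≤ |u j| ∧ |u j| ≤ c₂)
    (hTV : Tendsto
      (fun n : ℕ => (∑ j ∈ Finset.Icc 1 (n - 1), |u (j + 1) ^ 2 - u j ^ 2|) / n)
      atTop (nhds 0))
    (hirr : ∀ k, Irrational (θ k / Real.pi))
    (hirr' : ∀ k l, k ≠ l →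
      Irrational (((θ k + θ l) / 2) / Real.pi) ∧
      Irrational (((θ k - θ l) / 2) / Real.pi))
    (hα : 0 < ⨆ k : Fin (m + 1), ((v (k, 0)) ^ 2 + (v (k, 1)) ^ 2)) :
    Tendsto
      (fun n : ℕ =>
        srank (ropeRankOne (n := n) θ u v) /
          srank (Matrix.vecMulVec (fun j : Fin n => u ((j : ℕ) + 1)) v))
      atTop
      (nhds (2 / ⨆ k : Fin (m + 1), ((v (k, 0)) ^ 2 + (v (k, 1)) ^ 2))) ∧
    2 ≤ 2 / ⨆ k : Fin (m + 1), ((v (k, 0)) ^ 2 + (v (k, 1)) ^ 2) ∧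
    2 / (⨆ k : Fin (m + 1), ((v (k, 0)) ^ 2 + (v (k, 1)) ^ 2))
      ≤ (2 * (m + 1) : ℝ) := by
  classical
  have hv2 : ∑ p, (v p)^2 = 1 := eNorm_sq_eq hv
  set g : Fin (m+1) → ℝ := fun k => (v (k,0))^2 + (v (k,1))^2 with hgdef
  set M : ℝ := ⨆ k, g k with hMdef
  have hM0 : 0 < M := hα
  have hsum_pairs : ∀ (x : Fin (m+1) × Fin 2 → ℝ),
      ∑ k, ((x (k,0))^2 + (x (k,1))^2) = ∑ p, (x p)^2 := by
    intro x
    rw [Fintype.sum_prod_type]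
    exact Finset.sum_congr rfl fun k _ => (Fin.sum_univ_two (fun b => (x (k,b))^2)).symm
  have hgsum : ∑ k, g k = 1 := by
    simp only [hgdef]
    rw [hsum_pairs v, hv2]
  have hg0 : ∀ k, 0 ≤ g k := fun k => by simp only [hgdef]; positivity
  have hbddg : BddAbove (Set.range g) := Set.Finite.bddAbove (Set.finite_range g)
  obtain ⟨k0, hk0'⟩ := exists_eq_ciSup_of_finite (f := g)
  have hk0 : g k0 = M := hk0'.trans hMdef.symm
  have hgleM : ∀ k, g k ≤ M := fun k => hMdef ▸ le_ciSup hbddg k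
  have hMle1 : M ≤ 1 := by
    calc M = g k0 := hk0.symm
      _ ≤ ∑ k, g k := Finset.single_le_sum (fun k _ => hg0 k) (Finset.mem_univ k0)
      _ = 1 := hgsum
  have hMge : 1 ≤ ((m:ℝ)+1) * M := by
    calc (1:ℝ) = ∑ k, g k := hgsum.symm
      _ ≤ ∑ _k : Fin (m+1), M := Finset.sum_le_sum fun k _ => hgleM k
      _ = ((m:ℝ)+1) * M := by
          rw [Finset.sum_const, Finset.card_univ, Fintype.card_fin, nsmul_eq_mul]
          push_cast
          ring
  have ineq1 : 2 ≤ 2 / M := by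
    rw [le_div_iff₀ hM0]; nlinarith
  have ineq2 : 2 / M ≤ 2 * ((m:ℝ)+1) := by
    rw [div_le_iff₀ hM0]; nlinarith
  set a : ℕ → ℝ := fun j => u j ^ 2 with hadef
  have ha_eval : ∀ j, a j = u j ^ 2 := fun j => rfl
  have hca : ∀ j, |a j| ≤ c₂^2 := by
    intro j
    rw [ha_eval, abs_of_nonneg (sq_nonneg _), ← sq_abs]
    exact pow_le_pow_left₀ (abs_nonneg _) (hu j).2 2
  have hTV' : Tendsto (fun n : ℕ => (∑ j ∈ Finset.Icc 1 (n-1), |a (j+1) - a j|)/n)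
      atTop (nhds 0) := hTV
  set P : ℕ → ℝ → ℝ := fun n s => ∑ j ∈ Finset.Icc 1 n, a j * Real.cos (j * s) with hPdef
  set Qs : ℕ → ℝ → ℝ := fun n s => ∑ j ∈ Finset.Icc 1 n, a j * Real.sin (j * s) with hQdef
  set S : ℕ → ℝ := fun n => ∑ j ∈ Finset.Icc 1 n, a j with hSdef
  have hPev : ∀ (n : ℕ) (s : ℝ),
      ∑ j ∈ Finset.Icc 1 n, a j * Real.cos (j * s) = P n s := fun n s => rfl
  have hQev : ∀ (n : ℕ) (s : ℝ),
      ∑ j ∈ Finset.Icc 1 n, a j * Real.sin (j * s) = Qs n s := fun n s => rfl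
  have hS0 : ∀ n, 0 ≤ S n := fun n => Finset.sum_nonneg fun j _ => sq_nonneg _
  have hSlb : ∀ n : ℕ, (n:ℝ) * c₁^2 ≤ S n := by
    intro n
    have hterm : ∀ j ∈ Finset.Icc 1 n, c₁^2 ≤ a j := by
      intro j _
      rw [ha_eval]
      calc c₁^2 ≤ |u j|^2 := pow_le_pow_left₀ hc₁.le (hu j).1 2
        _ = u j ^2 := sq_abs _
    calc (n:ℝ) * c₁^2 = (Finset.Icc 1 n).card • c₁^2 := by
          rw [Nat.card_Icc, nsmul_eq_mul]
          norm_num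
      _ ≤ ∑ j ∈ Finset.Icc 1 n, a j := Finset.card_nsmul_le_sum _ _ _ hterm
  have hSpos : ∀ n : ℕ, 1 ≤ n → 0 < S n := by
    intro n hn
    have h1 := hSlb n
    have hn' : (1:ℝ) ≤ (n:ℝ) := by exact_mod_cast hn
    nlinarith
  have hdecay : ∀ s : ℝ, Irrational (s / 2 / Real.pi) →
      Tendsto (fun n => P n s / n) atTop (nhds 0) ∧
      Tendsto (fun n => Qs n s / n) atTop (nhds 0) :=
    fun s hs => trig_decay a (c₂^2) hca hTV' s (exp_ne_one_of_irr hs)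
  have hP0 : ∀ n, P n 0 = S n := by
    intro n
    show (∑ j ∈ Finset.Icc 1 n, a j * Real.cos (j * 0)) = ∑ j ∈ Finset.Icc 1 n, a j
    refine Finset.sum_congr rfl fun j _ => ?_
    rw [mul_zero, Real.cos_zero, mul_one]
  have hQ0 : ∀ n, Qs n 0 = 0 := by
    intro n
    show (∑ j ∈ Finset.Icc 1 n, a j * Real.sin (j * 0)) = 0
    simp
  set ε : ℕ → ℝ := fun n => ∑ k : Fin (m+1), ∑ l : Fin (m+1),
      (|P n (θ k - θ l) - (if k = l then S n else 0)| + |P n (θ k + θ l)|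
        + |Qs n (θ k + θ l)| + |Qs n (θ k - θ l)|) with hεdef
  have hε0 : ∀ n, 0 ≤ ε n := fun n => Finset.sum_nonneg fun k _ =>
    Finset.sum_nonneg fun l _ => by positivity
  have habsdiv : ∀ (f : ℕ → ℝ), Tendsto (fun n : ℕ => f n / n) atTop (nhds 0) →
      Tendsto (fun n : ℕ => |f n| / n) atTop (nhds 0) := by
    intro f hf
    have h1 := hf.abs
    rw [abs_zero] at h1
    refine h1.congr fun n => ?_
    rw [abs_div, Nat.abs_cast]
  have hall : ∀ k l : Fin (m+1), Tendsto (fun n : ℕ =>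
      |P n (θ k - θ l) - (if k = l then S n else 0)|/n + |P n (θ k + θ l)|/n
        + |Qs n (θ k + θ l)|/n + |Qs n (θ k - θ l)|/n) atTop (nhds 0) := by
    intro k l
    rcases eq_or_ne k l with hkl | hkl
    · subst hkl
      have ht1 : Tendsto (fun n : ℕ =>
          |P n (θ k - θ k) - (if k = k then S n else 0)|/n) atTop (nhds 0) := by
        have heq : ∀ n : ℕ, (0:ℝ) = |P n (θ k - θ k) - (if k = k then S n else 0)|/n := by
          intro n
          rw [if_pos rfl, sub_self, hP0 n, sub_self, abs_zero, zero_div]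
        exact Tendsto.congr heq tendsto_const_nhds
      have hirrk : Irrational ((θ k + θ k)/2/Real.pi) := by
        rw [add_self_div_two]
        exact hirr k
      have ht2 := habsdiv _ (hdecay _ hirrk).1
      have ht3 := habsdiv _ (hdecay _ hirrk).2
      have ht4 : Tendsto (fun n : ℕ => |Qs n (θ k - θ k)|/n) atTop (nhds 0) := by
        have heq : ∀ n : ℕ, (0:ℝ) = |Qs n (θ k - θ k)|/n := fun n => by
          rw [sub_self, hQ0 n, abs_zero, zero_div]
        exact Tendsto.congr heq tendsto_const_nhds
      have := ((ht1.add ht2).add ht3).add ht4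
      simpa using this
    · obtain ⟨hsum, hdiff⟩ := hirr' k l hkl
      have ht1 : Tendsto (fun n : ℕ =>
          |P n (θ k - θ l) - (if k = l then S n else 0)|/n) atTop (nhds 0) := by
        have := habsdiv _ (hdecay _ hdiff).1
        refine this.congr fun n => ?_
        rw [if_neg hkl, sub_zero]
      have ht2 := habsdiv _ (hdecay _ hsum).1
      have ht3 := habsdiv _ (hdecay _ hsum).2
      have ht4 := habsdiv _ (hdecay _ hdiff).2
      have := ((ht1.add ht2).add ht3).add ht4
      simpa using this
  have hεlim : Tendsto (fun n : ℕ => ε n / n) atTop (nhds 0) := by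
    have hrw : (fun n : ℕ => ε n / n) = fun n : ℕ => ∑ k : Fin (m+1), ∑ l : Fin (m+1),
        (|P n (θ k - θ l) - (if k = l then S n else 0)|/n + |P n (θ k + θ l)|/n
          + |Qs n (θ k + θ l)|/n + |Qs n (θ k - θ l)|/n) := by
      funext n
      show (∑ k : Fin (m+1), ∑ l : Fin (m+1),
        (|P n (θ k - θ l) - (if k = l then S n else 0)| + |P n (θ k + θ l)|
          + |Qs n (θ k + θ l)| + |Qs n (θ k - θ l)|)) / (n:ℝ) = _
      rw [Finset.sum_div]
      refine Finset.sum_congr rfl fun k _ => ?_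
      rw [Finset.sum_div]
      refine Finset.sum_congr rfl fun l _ => ?_
      ring
    rw [hrw]
    have h := tendsto_finset_sum (Finset.univ : Finset (Fin (m+1)))
      (fun k _ => tendsto_finset_sum (Finset.univ : Finset (Fin (m+1)))
        (fun l _ => hall k l))
    simpa using h
  set A : (Fin (m+1) × Fin 2 → ℝ) → Fin (m+1) → ℝ :=
    fun w k => v (k,0) * w (k,0) + v (k,1) * w (k,1) with hAdef
  set B : (Fin (m+1) × Fin 2 → ℝ) → Fin (m+1) → ℝ :=
    fun w k => v (k,0) * w (k,1) - v (k,1) * w (k,0) with hBdef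
  have hABg : ∀ w k, (A w k)^2 + (B w k)^2 = g k * ((w (k,0))^2 + (w (k,1))^2) := by
    intro w k
    simp only [hAdef, hBdef, hgdef]
    ring
  have hpair_le : ∀ (x : Fin (m+1) × Fin 2 → ℝ), (∑ p, (x p)^2 = 1) →
      ∀ k, (x (k,0))^2 + (x (k,1))^2 ≤ 1 := by
    intro x hx k
    calc (x (k,0))^2 + (x (k,1))^2 = ∑ b : Fin 2, (x (k,b))^2 :=
          (Fin.sum_univ_two (fun b => (x (k,b))^2)).symm
      _ ≤ ∑ k' : Fin (m+1), ∑ b : Fin 2, (x (k',b))^2 :=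
          Finset.single_le_sum (f := fun k' => ∑ b : Fin 2, (x (k',b))^2)
            (fun k' _ => Finset.sum_nonneg fun b _ => sq_nonneg _) (Finset.mem_univ k)
      _ = ∑ p, (x p)^2 := (Fintype.sum_prod_type (fun p : Fin (m+1) × Fin 2 => (x p)^2)).symm
      _ = 1 := hx
  have hq : ∀ (n : ℕ) (w : Fin (m+1) × Fin 2 → ℝ), eNorm w = 1 →
      |(∑ j : Fin n, ((ropeRankOne (n:=n) θ u v).mulVec w j)^2)
        - S n * ((∑ k, ((A w k)^2 + (B w k)^2))/2)| ≤ ε n := by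
    intro n w hw
    have hw2 : ∑ p, (w p)^2 = 1 := eNorm_sq_eq hw
    have hA1 : ∀ k, |A w k| ≤ 1 := by
      intro k
      simp only [hAdef]
      exact abs_dot_le _ _ _ _ (hpair_le v hv2 k) (hpair_le w hw2 k)
    have hB1 : ∀ k, |B w k| ≤ 1 := by
      intro k
      simp only [hBdef]
      rw [show v (k,0) * w (k,1) - v (k,1) * w (k,0)
        = v (k,0) * w (k,1) + v (k,1) * (-(w (k,0))) by ring]
      refine abs_dot_le _ _ _ _ (hpair_le v hv2 k) ?_
      rw [neg_sq]
      linarith [hpair_le w hw2 k]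
    have hstep1 : (∑ j : Fin n, ((ropeRankOne (n:=n) θ u v).mulVec w j)^2)
        = ∑ j ∈ Finset.Icc 1 n, a j *
            (∑ k, (Real.cos (j * θ k) * A w k + Real.sin (j * θ k) * B w k))^2 := by
      rw [← sum_fin_shift (fun j => a j *
        (∑ k, (Real.cos (j * θ k) * A w k + Real.sin (j * θ k) * B w k))^2) n]
      refine Finset.sum_congr rfl fun j _ => ?_
      rw [mulVec_ropeRankOne θ u v w j, mul_pow]
      simp only [hAdef, hBdef, ha_eval]
      norm_cast
    have hstep2 : ∑ j ∈ Finset.Icc 1 n, a j *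
          (∑ k, (Real.cos (j * θ k) * A w k + Real.sin (j * θ k) * B w k))^2
        = ∑ k, ∑ l, ((A w k * A w l + B w k * B w l) * P n (θ k - θ l)
            + (A w k * A w l - B w k * B w l) * P n (θ k + θ l)
            + (A w k * B w l + B w k * A w l) * Qs n (θ k + θ l)
            + (B w k * A w l - A w k * B w l) * Qs n (θ k - θ l)) / 2 := by
      rw [key_expand a θ (A w) (B w) n]
    have hstep3 : S n * ((∑ k, ((A w k)^2 + (B w k)^2))/2)
        = ∑ k, ∑ l, (if k = l then (A w k * A w l + B w k * B w l) * S n / 2 else 0) := by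
      have h1 : ∀ k : Fin (m+1),
          (∑ l, (if k = l then (A w k * A w l + B w k * B w l) * S n / 2 else 0))
          = (A w k * A w k + B w k * B w k) * S n / 2 := fun k => by simp
      have h2 : S n * ((∑ k, ((A w k)^2 + (B w k)^2))/2)
          = ∑ k, (A w k * A w k + B w k * B w k) * S n / 2 := by
        rw [Finset.sum_div, Finset.mul_sum]
        exact Finset.sum_congr rfl fun k _ => by ring
      rw [h2]
      exact Finset.sum_congr rfl fun k _ => (h1 k).symm
    rw [hstep1, hstep2, hstep3]
    refine le_trans (double_sum_abs_est
      (fun k l => ((A w k * A w l + B w k * B w l) * P n (θ k - θ l)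
        + (A w k * A w l - B w k * B w l) * P n (θ k + θ l)
        + (A w k * B w l + B w k * A w l) * Qs n (θ k + θ l)
        + (B w k * A w l - A w k * B w l) * Qs n (θ k - θ l)) / 2)
      (fun k l => if k = l then (A w k * A w l + B w k * B w l) * S n / 2 else 0)
      (fun k l => |P n (θ k - θ l) - (if k = l then S n else 0)| + |P n (θ k + θ l)|
        + |Qs n (θ k + θ l)| + |Qs n (θ k - θ l)|) ?_) (le_of_eq rfl)
    intro k l
    have hXY : ((A w k * A w l + B w k * B w l) * P n (θ k - θ l)
          + (A w k * A w l - B w k * B w l) * P n (θ k + θ l)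
          + (A w k * B w l + B w k * A w l) * Qs n (θ k + θ l)
          + (B w k * A w l - A w k * B w l) * Qs n (θ k - θ l)) / 2
        - (if k = l then (A w k * A w l + B w k * B w l) * S n / 2 else 0)
        = ((A w k * A w l + B w k * B w l) * (P n (θ k - θ l) - (if k = l then S n else 0))
          + (A w k * A w l - B w k * B w l) * P n (θ k + θ l)
          + (A w k * B w l + B w k * A w l) * Qs n (θ k + θ l)
          + (B w k * A w l - A w k * B w l) * Qs n (θ k - θ l)) / 2 := by
      rcases eq_or_ne k l with h | h
      · simp only [if_pos h]
        ring
      · simp only [if_neg h]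
        ring
    rw [hXY]
    exact four_term_bound (hA1 k) (hA1 l) (hB1 k) (hB1 l)
  have hub : ∀ (n : ℕ) (w : Fin (m+1) × Fin 2 → ℝ), eNorm w = 1 →
      ∑ i, ((ropeRankOne (n:=n) θ u v).mulVec w i)^2 ≤ S n * (M/2) + ε n := by
    intro n w hw
    have h1 := hq n w hw
    have hw2 : ∑ p, (w p)^2 = 1 := eNorm_sq_eq hw
    have hDle : (∑ k, ((A w k)^2 + (B w k)^2)) ≤ M := by
      calc ∑ k, ((A w k)^2 + (B w k)^2)
          = ∑ k, g k * ((w (k,0))^2 + (w (k,1))^2) :=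
            Finset.sum_congr rfl fun k _ => hABg w k
        _ ≤ ∑ k, M * ((w (k,0))^2 + (w (k,1))^2) := Finset.sum_le_sum fun k _ =>
            mul_le_mul_of_nonneg_right (hgleM k) (by positivity)
        _ = M * ∑ k, ((w (k,0))^2 + (w (k,1))^2) := (Finset.mul_sum _ _ _).symm
        _ = M := by rw [hsum_pairs w, hw2, mul_one]
    have h2 := (abs_le.mp h1).2
    have h3 : S n * ((∑ k, ((A w k)^2 + (B w k)^2))/2) ≤ S n * (M/2) :=
      mul_le_mul_of_nonneg_left (by linarith) (hS0 n)
    linarith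
  have hlbw : ∀ n : ℕ, ∃ w, eNorm w = 1 ∧
      S n * (M/2) - ε n ≤ ∑ i, ((ropeRankOne (n:=n) θ u v).mulVec w i)^2 := by
    intro n
    set w0 : Fin (m+1) × Fin 2 → ℝ := fun p => if p = (k0, 0) then 1 else 0 with hw0def
    have hw0sq : ∑ p, (w0 p)^2 = 1 := by
      have h1 : ∀ p : Fin (m+1) × Fin 2, (w0 p)^2 = if p = (k0, (0:Fin 2)) then 1 else 0 := by
        intro p
        by_cases h : p = (k0, (0:Fin 2)) <;> simp [hw0def, h]
      rw [Finset.sum_congr rfl fun p _ => h1 p, Finset.sum_ite_eq' Finset.univ (k0,(0:Fin 2))]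
      simp
    have hw0norm : eNorm w0 = 1 := by
      show Real.sqrt (∑ p, (w0 p)^2) = 1
      rw [hw0sq, Real.sqrt_one]
    have hD : (∑ k, ((A w0 k)^2 + (B w0 k)^2)) = M := by
      have hcomp : ∀ k, (A w0 k)^2 + (B w0 k)^2 = if k = k0 then g k else 0 := by
        intro k
        simp only [hAdef, hBdef, hgdef, hw0def]
        by_cases h : k = k0
        · subst h
          simp only [if_pos rfl, Prod.mk.injEq]
          norm_num
        · simp only [Prod.mk.injEq, h, false_and, and_false, if_false, if_neg h]
          ring
      rw [Finset.sum_congr rfl fun k _ => hcomp k, Finset.sum_ite_eq' Finset.univ k0 g]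
      simp [hk0]
    refine ⟨w0, hw0norm, ?_⟩
    have h1 := hq n w0 hw0norm
    have h2 := (abs_le.mp h1).1
    rw [hD] at h2
    linarith
  have hspec : ∀ n : ℕ,
      |specNorm (ropeRankOne (n:=n) θ u v)^2 - S n * (M/2)| ≤ ε n := by
    intro n
    exact specNorm_sq_sandwich _ (S n * (M/2)) (ε n) (hε0 n)
      (mul_nonneg (hS0 n) (by linarith)) (hub n) (hlbw n)
  have hfrob : ∀ n : ℕ, frobNorm (ropeRankOne (n:=n) θ u v)^2 = S n := by
    intro n
    rw [frobNorm_sq]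
    have hrow : ∀ j : Fin n,
        ∑ p, ((ropeRankOne (n:=n) θ u v) j p)^2 = a ((j:ℕ)+1) := by
      intro j
      have hXp : ∀ p, (ropeRankOne (n:=n) θ u v) j p
          = u ((j:ℕ)+1) * ((ropeRot θ ((j:ℕ)+1)).mulVec v p) := by
        intro p
        simp [ropeRankOne, Matrix.mulVec_smul]
      calc ∑ p, ((ropeRankOne (n:=n) θ u v) j p)^2
          = ∑ p, (u ((j:ℕ)+1))^2 * ((ropeRot θ ((j:ℕ)+1)).mulVec v p)^2 :=
            Finset.sum_congr rfl fun p _ => by rw [hXp p]; ring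
        _ = (u ((j:ℕ)+1))^2 * ∑ p, ((ropeRot θ ((j:ℕ)+1)).mulVec v p)^2 :=
            (Finset.mul_sum _ _ _).symm
        _ = (u ((j:ℕ)+1))^2 * ∑ p, (v p)^2 := by rw [ropeRot_norm]
        _ = a ((j:ℕ)+1) := by rw [hv2, mul_one, ha_eval]
    rw [Finset.sum_congr rfl fun j _ => hrow j, sum_fin_shift a n]
  have hsrank2 : ∀ n : ℕ, 1 ≤ n →
      srank (Matrix.vecMulVec (fun j : Fin n => u ((j:ℕ)+1)) v) = 1 := by
    intro n hn
    have hSn := hSpos n hn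
    have hfrob2 : frobNorm (Matrix.vecMulVec (fun j : Fin n => u ((j:ℕ)+1)) v)^2 = S n := by
      rw [frobNorm_sq]
      have hrow : ∀ j : Fin n,
          ∑ p, ((Matrix.vecMulVec (fun j : Fin n => u ((j:ℕ)+1)) v) j p)^2 = a ((j:ℕ)+1) := by
        intro j
        simp only [Matrix.vecMulVec_apply]
        calc ∑ p, (u ((j:ℕ)+1) * v p)^2
            = (u ((j:ℕ)+1))^2 * ∑ p, (v p)^2 := by
              rw [Finset.mul_sum]
              exact Finset.sum_congr rfl fun p _ => by ring
          _ = a ((j:ℕ)+1) := by rw [hv2, mul_one, ha_eval]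
      rw [Finset.sum_congr rfl fun j _ => hrow j, sum_fin_shift a n]
    have hspec2 : specNorm (Matrix.vecMulVec (fun j : Fin n => u ((j:ℕ)+1)) v)^2 = S n := by
      rw [specNorm_vecMulVec _ v hv]
      have h1 : eNorm (fun j : Fin n => u ((j:ℕ)+1))^2 = ∑ j : Fin n, (u ((j:ℕ)+1))^2 :=
        Real.sq_sqrt (Finset.sum_nonneg fun j _ => sq_nonneg _)
      rw [h1]
      exact sum_fin_shift a n
    rw [srank, hfrob2, hspec2, div_self (ne_of_gt hSn)]
  have hF : Tendsto (fun n : ℕ => specNorm (ropeRankOne (n:=n) θ u v)^2 / S n)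
      atTop (nhds (M/2)) := by
    have hdiff : Tendsto
        (fun n : ℕ => specNorm (ropeRankOne (n:=n) θ u v)^2 / S n - M/2)
        atTop (nhds 0) := by
      refine squeeze_zero_norm' ?_ (by simpa using hεlim.div_const (c₁^2))
      filter_upwards [eventually_ge_atTop 1] with n hn
      have hSn := hSpos n hn
      have h1 := hspec n
      have heq : specNorm (ropeRankOne (n:=n) θ u v)^2 / S n - M/2
          = (specNorm (ropeRankOne (n:=n) θ u v)^2 - S n * (M/2)) / S n := by
        field_simp
      rw [Real.norm_eq_abs, heq, abs_div, abs_of_pos hSn]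
      have hn1 : (1:ℝ) ≤ (n:ℝ) := by exact_mod_cast hn
      have hnc : (0:ℝ) < (n:ℝ) * c₁^2 := by positivity
      calc |specNorm (ropeRankOne (n:=n) θ u v)^2 - S n * (M/2)| / S n
          ≤ ε n / S n := div_le_div_of_nonneg_right' h1 hSn
        _ ≤ ε n / ((n:ℝ) * c₁^2) := div_le_div_of_nonneg_left (hε0 n) hnc (hSlb n)
        _ = (ε n / n) / c₁^2 := by rw [div_div]
    have h2 := hdiff.add_const (M/2)
    rw [zero_add] at h2
    exact h2.congr fun n => by ring
  have hM2 : (M/2) ≠ 0 := by positivity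
  have hFinv := hF.inv₀ hM2
  refine ⟨?_, ineq1, ineq2⟩
  rw [show (2:ℝ)/M = (M/2)⁻¹ from (inv_div M 2).symm]
  refine hFinv.congr' ?_
  filter_upwards [eventually_ge_atTop 1] with n hn
  rw [hsrank2 n hn, div_one, inv_div,
    show srank (ropeRankOne (n:=n) θ u v)
      = frobNorm (ropeRankOne (n:=n) θ u v)^2 / specNorm (ropeRankOne (n:=n) θ u v)^2
      from rfl,
    hfrob n]
end
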